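/- arXiv:1812.03951 — 3 statements merged into one kernel-verified Lean document; each statement's English description precedes it below -/
import Mathlib

section
/- Let 2 ≤ p < ∞ and let X be a complex Banach space. Suppose that for every sequence (x_n)_{n∈ℕ} ⊂ X there exists a constant C ≥ 1 (possibly depending on the sequence) such that E_ε ‖∑_{n=1}^N ε_n a_n x_n n^{-s}‖_{H_p(X)} ≤ C ‖∑_{n=1}^N a_n x_n n^{-s}‖_{H_p(X)} for all N and all scalars a_1,…,a_N ∈ ℂ. Then there exists a single constant C ≥ 1 such that E_ε ‖∑_{n=1}^N ε_n x_n n^{-s}‖_{H_p(X)} ≤ C ‖∑_{n=1}^N x_n n^{-s}‖_{H_p(X)} for every N and every x_1,…,x_N ∈ X. -/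
open MeasureTheory TopologicalSpace

noncomputable section

instance : MeasurableSpace Circle := borel Circle
instance : BorelSpace Circle := ⟨rfl⟩

/-- The Haar probability measure on the circle `𝕋 = {z : ℂ, |z| = 1}`. -/
def muT : Measure Circle := Measure.haarMeasure ⊤

/-- The Haar probability measure on the infinite polytorus `𝕋^ℕ`
(equivalently, the product of the Haar probability measures of the factors). -/
def muTN : Measure (ℕ → Circle) := Measure.haarMeasure ⊤

instance : IsProbabilityMeasure muT := by
  constructor
  simpa [muT] using Measure.haarMeasure_self (K₀ := (⊤ : PositiveCompacts Circle))

instance : IsProbabilityMeasure muTN := by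
  constructor
  simpa [muTN] using Measure.haarMeasure_self (K₀ := (⊤ : PositiveCompacts (ℕ → Circle)))

/-- The monomial `z ↦ z^{α(n)}`, where `α(n)` is the finitely supported sequence of exponents
in the prime factorization `n = ∏_i pᵢ^{αᵢ(n)}`, the primes `pᵢ = Nat.nth Nat.Prime i` being
listed in increasing order.  (For `n ≥ 1`, every prime factor of `n` is among the first `n`
primes, so the range `Finset.range n` captures all nonzero exponents.) -/
def mon (n : ℕ) (z : ℕ → Circle) : ℂ :=
  ∏ i ∈ Finset.range n, (z i : ℂ) ^ (Nat.factorization n (Nat.nth Nat.Prime i))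

/-- The complex sign `±1` associated to a boolean sign choice. -/
def sgn {N : ℕ} (ε : Fin N → Bool) (n : Fin N) : ℂ := if ε n then 1 else -1

/-- The average `E_ε = 2^{-N} ∑_{ε ∈ {-1,1}^N}` over all choices of `N` signs. -/
def Eavg (N : ℕ) (F : (Fin N → Bool) → ℝ) : ℝ :=
  (2 ^ N : ℝ)⁻¹ * ∑ ε : Fin N → Bool, F ε

/-- The `H_p(X)`-norm of the Dirichlet polynomial `∑_{n=1}^N x_n n^{-s}`, defined via the Bohr
transform as `(∫_{𝕋^ℕ} ‖∑_{n=1}^N x_n z^{α(n)}‖_X^p dz)^{1/p}`.  Here, for `n : Fin N`,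
`x n` is the coefficient of `((n : ℕ) + 1)^{-s}`. -/
def Hnorm (p : ℝ) {X : Type*} [NormedAddCommGroup X] [NormedSpace ℂ X]
    (N : ℕ) (x : Fin N → X) : ℝ :=
  (∫ z : ℕ → Circle, ‖∑ n : Fin N, mon ((n : ℕ) + 1) z • x n‖ ^ p ∂muTN) ^ (1 / p)

/-! ### Auxiliary lemmas -/

lemma lt_nth_prime (i : ℕ) : i < Nat.nth Nat.Prime i := by
  induction i with
  | zero => exact (Nat.prime_nth_prime 0).pos
  | succ k ih =>
    have h2 : Nat.nth Nat.Prime k < Nat.nth Nat.Prime (k+1) :=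
      (Nat.nth_lt_nth Nat.infinite_setOf_prime).2 (Nat.lt_succ_self k)
    omega

lemma mon_mul (m i : ℕ) (hm : 0 < m) (hmq : m < Nat.nth Nat.Prime i) (z : ℕ → Circle) :
    mon (m * Nat.nth Nat.Prime i) z = (z i : ℂ) * mon m z := by
  set q := Nat.nth Nat.Prime i with hq_def
  have hq : q.Prime := Nat.prime_nth_prime i
  have hiq : i < q := lt_nth_prime i
  have hfact : (m * q).factorization = m.factorization + q.factorization :=
    Nat.factorization_mul hm.ne' hq.pos.ne'
  have hfq : q.factorization = Finsupp.single q 1 := hq.factorization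
  have hle : m ≤ m * q := Nat.le_mul_of_pos_right m hq.pos
  have hiq2 : i < m * q := lt_of_lt_of_le hiq (Nat.le_mul_of_pos_left q hm)
  unfold mon
  have step : ∀ j ∈ Finset.range (m * q),
      (z j : ℂ) ^ ((m*q).factorization (Nat.nth Nat.Prime j)) =
      (z j : ℂ) ^ (m.factorization (Nat.nth Nat.Prime j)) *
      (z j : ℂ) ^ (q.factorization (Nat.nth Nat.Prime j)) := by
    intro j _
    rw [hfact, Finsupp.add_apply, pow_add]
  rw [Finset.prod_congr rfl step, Finset.prod_mul_distrib]
  have h1 : ∏ j ∈ Finset.range (m * q), (z j : ℂ) ^ (m.factorization (Nat.nth Nat.Prime j)) =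
      ∏ j ∈ Finset.range m, (z j : ℂ) ^ (m.factorization (Nat.nth Nat.Prime j)) := by
    refine (Finset.prod_subset (Finset.range_subset_range.2 hle) ?_).symm
    intro j _ hj
    rw [Finset.mem_range, not_lt] at hj
    have : m < Nat.nth Nat.Prime j := lt_of_le_of_lt hj (lt_nth_prime j)
    rw [Nat.factorization_eq_zero_of_lt this, pow_zero]
  have h2 : ∏ j ∈ Finset.range (m * q), (z j : ℂ) ^ (q.factorization (Nat.nth Nat.Prime j)) =
      (z i : ℂ) := by
    rw [Finset.prod_eq_single i]
    · rw [hfq, ← hq_def, Finsupp.single_eq_same, pow_one]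
    · intro j _ hji
      rw [hfq, Finsupp.single_apply, if_neg, pow_zero]
      exact fun hc => hji (Nat.nth_injective Nat.infinite_setOf_prime (hc.symm.trans hq_def))
    · intro hc
      exact absurd (Finset.mem_range.2 hiq2) hc
  rw [h1, h2, mul_comm]

lemma sum_comp_inj {α β : Type*} [Fintype α] [DecidableEq α] [Fintype β] [DecidableEq β]
    (g : α → β) (hg : Function.Injective g) (G : (α → Bool) → ℝ) :
    ∑ ε : β → Bool, G (ε ∘ g) =
      2 ^ (Fintype.card β - Fintype.card α) * ∑ δ : α → Bool, G δ := by
  classical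
  set S : Set β := Set.range g with hS
  haveI : DecidablePred (· ∈ S) := fun b => Classical.dec _
  set e : α ≃ S := Equiv.ofInjective g hg with he
  set F : ((S → Bool) × ((Sᶜ : Set β) → Bool)) → (β → Bool) :=
    fun uv b => if h : b ∈ S then uv.1 ⟨b, h⟩ else uv.2 ⟨b, h⟩ with hF
  have hFbij : Function.Bijective F := by
    constructor
    · intro ⟨u, v⟩ ⟨u', v'⟩ huv
      simp only [Prod.mk.injEq]
      constructor
      · funext s
        have := congrFun huv s.1
        simpa [hF, s.2] using this
      · funext s
        have := congrFun huv s.1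
        have hs : s.1 ∉ S := s.2
        simpa [hF, hs] using this
    · intro ε
      refine ⟨⟨fun s => ε s.1, fun s => ε s.1⟩, ?_⟩
      funext b
      by_cases hb : b ∈ S <;> simp [hF, hb]
  have h1 : ∑ ε : β → Bool, G (ε ∘ g) = ∑ uv : (S → Bool) × ((Sᶜ : Set β) → Bool),
      G (F uv ∘ g) := (Fintype.sum_bijective F hFbij _ _ (fun uv => rfl)).symm
  have h2 : ∀ uv : (S → Bool) × ((Sᶜ : Set β) → Bool), F uv ∘ g = uv.1 ∘ e := by
    intro uv
    funext n
    have hgn : g n ∈ S := Set.mem_range_self n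
    simp only [Function.comp_apply, hF, dif_pos hgn]
    rfl
  rw [h1]
  rw [Fintype.sum_prod_type]
  have h3 : ∀ u : S → Bool, ∑ v : (Sᶜ : Set β) → Bool, G (F (u, v) ∘ g) =
      (2 : ℝ) ^ (Fintype.card β - Fintype.card α) * G (u ∘ e) := by
    intro u
    rw [Finset.sum_congr rfl (fun v _ => show G (F (u, v) ∘ g) = G (u ∘ e) by rw [h2 (u, v)])]
    rw [Finset.sum_const, Finset.card_univ, nsmul_eq_mul]
    congr 1
    rw [Fintype.card_fun, Fintype.card_bool]
    have hcS : Fintype.card S = Fintype.card α := (Fintype.card_congr e).symm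
    rw [Fintype.card_compl_set, hcS]
    push_cast
    ring
  rw [Finset.sum_congr rfl (fun u _ => h3 u), ← Finset.mul_sum]
  congr 1
  exact Fintype.sum_bijective (fun u : S → Bool => u ∘ e)
    ((e.arrowCongr (Equiv.refl Bool)).symm.bijective) _ _ (fun u => rfl)

lemma Hnorm_nonneg (p : ℝ) {X : Type*} [NormedAddCommGroup X] [NormedSpace ℂ X]
    (N : ℕ) (x : Fin N → X) : 0 ≤ Hnorm p N x :=
  Real.rpow_nonneg (integral_nonneg fun _ => Real.rpow_nonneg (norm_nonneg _) p) _

lemma exists_block_primes (N : ℕ → ℕ) :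
    ∃ (q I : ℕ → ℕ), (∀ k, q k = Nat.nth Nat.Prime (I k)) ∧ StrictMono q ∧ ∀ k, N k < q k := by
  refine ⟨fun k => Nat.nth Nat.Prime (k + ∑ j ∈ Finset.range (k+1), N j),
         fun k => k + ∑ j ∈ Finset.range (k+1), N j, fun _ => rfl, ?_, ?_⟩
  · have hI : StrictMono fun k => k + ∑ j ∈ Finset.range (k+1), N j := by
      apply strictMono_nat_of_lt_succ
      intro k
      have := Finset.sum_le_sum_of_subset (f := N) (Finset.range_subset_range.2 (by omega : k+1 ≤ k+1+1))
      omega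
    exact fun a b hab => (Nat.nth_lt_nth Nat.infinite_setOf_prime).2 (hI hab)
  · intro k
    show N k < Nat.nth Nat.Prime (k + ∑ j ∈ Finset.range (k+1), N j)
    have h1 : N k ≤ ∑ j ∈ Finset.range (k+1), N j :=
      Finset.single_le_sum (f := N) (fun _ _ => Nat.zero_le _) (Finset.self_mem_range_succ k)
    have h2 := lt_nth_prime (k + ∑ j ∈ Finset.range (k+1), N j)
    omega

/-- If for every sequence `(x_n) ⊆ X` the system `(x_n n^{-s})` is RUC in `H_p(X)` (with a
constant possibly depending on the sequence), then a single uniform constant works. -/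
theorem stmt1 {X : Type*} [NormedAddCommGroup X] [NormedSpace ℂ X] [CompleteSpace X]
    (p : ℝ) (hp : 2 ≤ p)
    (h : ∀ x : ℕ → X, ∃ C : ℝ, 1 ≤ C ∧ ∀ (N : ℕ) (a : Fin N → ℂ),
      Eavg N (fun ε => Hnorm p N (fun n => sgn ε n • (a n • x ((n : ℕ) + 1)))) ≤
        C * Hnorm p N (fun n => a n • x ((n : ℕ) + 1))) :
    ∃ C : ℝ, 1 ≤ C ∧ ∀ (N : ℕ) (x : Fin N → X),
      Eavg N (fun ε => Hnorm p N (fun n => sgn ε n • x n)) ≤ C * Hnorm p N x := by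
  classical
  by_contra hcon
  push_neg at hcon
  have hex : ∀ k : ℕ, ∃ (Nk : ℕ) (xk : Fin Nk → X),
      ((k : ℝ) + 1) * Hnorm p Nk xk <
        Eavg Nk (fun ε => Hnorm p Nk (fun n => sgn ε n • xk n)) := by
    intro k
    obtain ⟨Nk, xk, hk⟩ := hcon ((k : ℝ) + 1) (le_add_of_nonneg_left (Nat.cast_nonneg k))
    exact ⟨Nk, xk, hk⟩
  choose N xk hxk using hex
  obtain ⟨q, I, hqI, hqmono, hNq⟩ := exists_block_primes N
  have hqP : ∀ k, (q k).Prime := fun k => (hqI k) ▸ Nat.prime_nth_prime (I k)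
  -- uniqueness of block decomposition
  have huniq : ∀ k k' n n', n < N k → n' < N k' → (n+1) * q k = (n'+1) * q k' →
      k = k' ∧ n = n' := by
    have key : ∀ k k' n n', n < N k → n' < N k' → (n+1) * q k = (n'+1) * q k' → ¬ k < k' := by
      intro k k' n n' hn hn' heq hlt
      have hqq : q k < q k' := hqmono hlt
      have hNk := hNq k
      have hNk' := hNq k'
      have hdvd : q k' ∣ (n+1) * q k := heq ▸ Dvd.intro_left (n'+1) rfl
      rcases (Nat.Prime.dvd_mul (hqP k')).1 hdvd with hd | hd
      · have h1 : q k' ≤ n + 1 := Nat.le_of_dvd (Nat.succ_pos n) hd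
        omega
      · have := (Nat.prime_dvd_prime_iff_eq (hqP k') (hqP k)).1 hd
        omega
    intro k k' n n' hn hn' heq
    have hkk : k = k' := by
      rcases lt_trichotomy k k' with hlt | hEq | hgt
      · exact absurd hlt (key k k' n n' hn hn' heq)
      · exact hEq
      · exact absurd hgt (key k' k n' n hn' hn heq.symm)
    subst hkk
    refine ⟨rfl, ?_⟩
    have := Nat.eq_of_mul_eq_mul_right (hqP k).pos heq
    omega
  -- the global sequence
  have hxsex : ∃ xs : ℕ → X, ∀ (k : ℕ) (n : Fin (N k)), xs (((n : ℕ)+1) * q k) = xk k n := by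
    refine ⟨fun m => if h : ∃ pr : ℕ × ℕ, pr.2 < N pr.1 ∧ m = (pr.2+1) * q pr.1
      then xk h.choose.1 ⟨h.choose.2, h.choose_spec.1⟩ else 0, ?_⟩
    intro k n
    have hP : ∃ pr : ℕ × ℕ, pr.2 < N pr.1 ∧ ((n : ℕ)+1) * q k = (pr.2+1) * q pr.1 :=
      ⟨(k, (n : ℕ)), n.2, rfl⟩
    simp only [dif_pos hP]
    obtain ⟨hk, hn⟩ := huniq hP.choose.1 k hP.choose.2 (n : ℕ) hP.choose_spec.1 n.2
      hP.choose_spec.2.symm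
    have haux : ∀ (k1 n1 : ℕ) (h1 : n1 < N k1) (k : ℕ) (n : Fin (N k)),
        k1 = k → n1 = (n : ℕ) → xk k1 ⟨n1, h1⟩ = xk k n := by
      intro k1 n1 h1 k n hk hn
      subst hk
      exact congrArg (xk k1) (Fin.ext hn)
    exact haux _ _ _ k n hk hn
  obtain ⟨xs, hxs⟩ := hxsex
  obtain ⟨C, hC1, hC⟩ := h xs
  -- the key uniform estimate
  have hkey : ∀ k : ℕ,
      Eavg (N k) (fun ε => Hnorm p (N k) (fun n => sgn ε n • xk k n)) ≤
        C * Hnorm p (N k) (xk k) := by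
    intro k
    have hq0 : 0 < q k := (hqP k).pos
    have hNM : N k ≤ N k * q k := Nat.le_mul_of_pos_right _ hq0
    -- the embedding g
    have hgex : ∃ g : Fin (N k) → Fin (N k * q k), Function.Injective g ∧
        ∀ n : Fin (N k), ((g n : ℕ)) + 1 = ((n : ℕ)+1) * q k := by
      have hkey2 : ∀ a b : ℕ, a ≤ b → 0 < a → a - 1 < b := by omega
      have hlt : ∀ n : Fin (N k), ((n : ℕ)+1) * q k - 1 < N k * q k := by
        intro n
        exact hkey2 _ _ (Nat.mul_le_mul_right _ (Nat.succ_le_of_lt n.2)) (by positivity)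
      refine ⟨fun n => ⟨((n : ℕ)+1) * q k - 1, hlt n⟩, ?_, ?_⟩
      · intro x y hxy
        have hval := congrArg Fin.val hxy
        simp only at hval
        have hx : 0 < ((x : ℕ)+1) * q k := by positivity
        have hy : 0 < ((y : ℕ)+1) * q k := by positivity
        have hkey3 : ∀ a b : ℕ, 0 < a → 0 < b → a - 1 = b - 1 → a = b := by omega
        have := Nat.eq_of_mul_eq_mul_right hq0 (hkey3 _ _ hx hy hval)
        exact Fin.ext (by omega)
      · intro n
        have hpos : 0 < ((n : ℕ)+1) * q k := by positivity
        simp only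
        omega
    obtain ⟨g, hginj, hg1⟩ := hgex
    -- the coefficients a
    have haex : ∃ a : Fin (N k * q k) → ℂ, (∀ n, a (g n) = 1) ∧
        (∀ m, (∀ n, m ≠ g n) → a m = 0) :=
      ⟨fun m => if ∃ n, m = g n then 1 else 0, fun n => if_pos ⟨n, rfl⟩,
        fun m hm => if_neg (fun ⟨n, hn⟩ => hm n hn)⟩
    obtain ⟨a, ha1, ha0⟩ := haex
    -- key pointwise identity
    have hgen : ∀ (c : Fin (N k * q k) → ℂ) (z : ℕ → Circle),
        ∑ m : Fin (N k * q k), mon ((m : ℕ)+1) z • ((c m * a m) • xs ((m : ℕ)+1)) =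
        (z (I k) : ℂ) • ∑ n : Fin (N k), mon ((n : ℕ)+1) z • (c (g n) • xk k n) := by
      intro c z
      have hterm0 : ∀ m : Fin (N k * q k), m ∉ Finset.univ.image g →
          mon ((m : ℕ)+1) z • ((c m * a m) • xs ((m : ℕ)+1)) = 0 := by
        intro m hm
        rw [Finset.mem_image] at hm
        push_neg at hm
        have ham : a m = 0 := ha0 m (fun n hn => hm n (Finset.mem_univ n) hn.symm)
        rw [ham, mul_zero, zero_smul, smul_zero]
      calc ∑ m : Fin (N k * q k), mon ((m : ℕ)+1) z • ((c m * a m) • xs ((m : ℕ)+1))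
          = ∑ m ∈ Finset.univ.image g, mon ((m : ℕ)+1) z • ((c m * a m) • xs ((m : ℕ)+1)) :=
            (Finset.sum_subset (Finset.subset_univ _) (fun m _ hm => hterm0 m hm)).symm
        _ = ∑ n : Fin (N k),
              mon (((g n : ℕ))+1) z • ((c (g n) * a (g n)) • xs (((g n : ℕ))+1)) :=
            Finset.sum_image (fun x _ y _ hxy => hginj hxy)
        _ = ∑ n : Fin (N k), (z (I k) : ℂ) • (mon ((n : ℕ)+1) z • (c (g n) • xk k n)) := by
            refine Finset.sum_congr rfl fun n _ => ?_
            have hlt : ((n : ℕ)+1) < Nat.nth Nat.Prime (I k) := by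
              have h1 := n.2
              have h2 := hNq k
              rw [← hqI k]
              omega
            rw [ha1 n, mul_one, hg1 n, hxs k n, hqI k,
              mon_mul ((n : ℕ)+1) (I k) (Nat.succ_pos _) hlt z, mul_smul]
        _ = (z (I k) : ℂ) • ∑ n : Fin (N k), mon ((n : ℕ)+1) z • (c (g n) • xk k n) :=
            (Finset.smul_sum).symm
    -- Hnorm identities
    have hnorm1 : Hnorm p (N k * q k) (fun m => a m • xs ((m : ℕ)+1)) =
        Hnorm p (N k) (xk k) := by
      unfold Hnorm
      refine congrArg (fun t : ℝ => t ^ (1/p)) ?_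
      refine integral_congr_ae (Filter.Eventually.of_forall fun z => ?_)
      show ‖∑ m : Fin (N k * q k), mon ((m : ℕ)+1) z • (a m • xs ((m : ℕ)+1))‖ ^ p =
        ‖∑ n : Fin (N k), mon ((n : ℕ)+1) z • xk k n‖ ^ p
      have hz : ∑ m : Fin (N k * q k), mon ((m : ℕ)+1) z • (a m • xs ((m : ℕ)+1)) =
          (z (I k) : ℂ) • ∑ n : Fin (N k), mon ((n : ℕ)+1) z • xk k n := by
        calc ∑ m : Fin (N k * q k), mon ((m : ℕ)+1) z • (a m • xs ((m : ℕ)+1))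
            = ∑ m : Fin (N k * q k), mon ((m : ℕ)+1) z • (((1 : ℂ) * a m) • xs ((m : ℕ)+1)) := by
              refine Finset.sum_congr rfl fun m _ => ?_
              rw [one_mul]
          _ = (z (I k) : ℂ) • ∑ n : Fin (N k), mon ((n : ℕ)+1) z • ((1 : ℂ) • xk k n) :=
              hgen (fun _ => 1) z
          _ = (z (I k) : ℂ) • ∑ n : Fin (N k), mon ((n : ℕ)+1) z • xk k n := by
              simp only [one_smul]
      rw [hz, norm_smul]
      simp [Circle.norm_coe]
    have hnorm2 : ∀ ε : Fin (N k * q k) → Bool,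
        Hnorm p (N k * q k) (fun m => sgn ε m • (a m • xs ((m : ℕ)+1))) =
        Hnorm p (N k) (fun n => sgn (ε ∘ g) n • xk k n) := by
      intro ε
      unfold Hnorm
      refine congrArg (fun t : ℝ => t ^ (1/p)) ?_
      refine integral_congr_ae (Filter.Eventually.of_forall fun z => ?_)
      show ‖∑ m : Fin (N k * q k), mon ((m : ℕ)+1) z • (sgn ε m • (a m • xs ((m : ℕ)+1)))‖ ^ p =
        ‖∑ n : Fin (N k), mon ((n : ℕ)+1) z • (sgn (ε ∘ g) n • xk k n)‖ ^ p
      have hz : ∑ m : Fin (N k * q k), mon ((m : ℕ)+1) z • (sgn ε m • (a m • xs ((m : ℕ)+1))) =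
          (z (I k) : ℂ) • ∑ n : Fin (N k), mon ((n : ℕ)+1) z • (sgn (ε ∘ g) n • xk k n) := by
        calc ∑ m : Fin (N k * q k), mon ((m : ℕ)+1) z • (sgn ε m • (a m • xs ((m : ℕ)+1)))
            = ∑ m : Fin (N k * q k), mon ((m : ℕ)+1) z • ((sgn ε m * a m) • xs ((m : ℕ)+1)) := by
              refine Finset.sum_congr rfl fun m _ => ?_
              rw [mul_smul]
          _ = (z (I k) : ℂ) • ∑ n : Fin (N k), mon ((n : ℕ)+1) z • (sgn (ε ∘ g) n • xk k n) :=
              hgen (fun m => sgn ε m) z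
      rw [hz, norm_smul]
      simp [Circle.norm_coe]
    -- averaging identity
    have havg : Eavg (N k * q k) (fun ε => Hnorm p (N k) (fun n => sgn (ε ∘ g) n • xk k n)) =
        Eavg (N k) (fun δ => Hnorm p (N k) (fun n => sgn δ n • xk k n)) := by
      unfold Eavg
      rw [show (∑ ε : Fin (N k * q k) → Bool,
            Hnorm p (N k) fun n => sgn (ε ∘ g) n • xk k n) =
          2 ^ (Fintype.card (Fin (N k * q k)) - Fintype.card (Fin (N k))) *
            ∑ δ : Fin (N k) → Bool, Hnorm p (N k) (fun n => sgn δ n • xk k n) from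
          sum_comp_inj g hginj (fun δ => Hnorm p (N k) fun n => sgn δ n • xk k n)]
      simp only [Fintype.card_fin]
      have h2M : (2 : ℝ) ^ (N k * q k) = 2 ^ (N k * q k - N k) * 2 ^ (N k) := by
        rw [← pow_add]
        congr 1
        omega
      have hne : (2 : ℝ) ^ (N k * q k - N k) ≠ 0 := by positivity
      have hne2 : (2 : ℝ) ^ (N k) ≠ 0 := by positivity
      rw [h2M, mul_inv]
      field_simp
    -- conclude
    have e1 : Eavg (N k * q k)
        (fun ε => Hnorm p (N k * q k) (fun m => sgn ε m • (a m • xs ((m : ℕ)+1)))) =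
        Eavg (N k) (fun δ => Hnorm p (N k) (fun n => sgn δ n • xk k n)) := by
      rw [← havg]
      unfold Eavg
      congr 1
      exact Finset.sum_congr rfl (fun ε _ => hnorm2 ε)
    have e2 := hC (N k * q k) a
    rw [e1, hnorm1] at e2
    exact e2
  -- final contradiction
  obtain ⟨k, hkC⟩ := exists_nat_ge C
  have hH0 : 0 ≤ Hnorm p (N k) (xk k) := Hnorm_nonneg p (N k) (xk k)
  have h1 := hxk k
  have h2 := hkey k
  have h3 : C * Hnorm p (N k) (xk k) ≤ ((k : ℝ) + 1) * Hnorm p (N k) (xk k) :=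
    mul_le_mul_of_nonneg_right (by linarith) hH0
  linarith
end
end

section
/- For every 1 ≤ p < ∞ there is a constant C_p ≥ 1, depending only on p, such that for every complex Banach space X, every N and all x_1,…,x_N ∈ X one has (1/C_p) · E_ε ‖∑_{n=1}^N ε_n x_n n^{-s}‖_{H_p(X)} ≤ E_ε ‖∑_{n=1}^N ε_n x_n‖_X ≤ C_p · E_ε ‖∑_{n=1}^N ε_n x_n n^{-s}‖_{H_p(X)}. -/
open MeasureTheory TopologicalSpace

noncomputable section

universe u

namespace Stmt4Aux
open Finset

variable {N : ℕ}

lemma norm_sgn (ε : Fin N → Bool) (n : Fin N) : ‖sgn ε n‖ = 1 := by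
  unfold sgn; split <;> simp

lemma sgn_smul_norm {X : Type u} [NormedAddCommGroup X] [NormedSpace ℂ X]
    (ε : Fin N → Bool) (n : Fin N) (v : X) : ‖sgn ε n • v‖ = ‖v‖ := by
  rw [norm_smul, norm_sgn, one_mul]

/-- flip the sign at coordinates where `P` holds -/
def flipIf (P : Fin N → Prop) [DecidablePred P] (ε : Fin N → Bool) : Fin N → Bool :=
  fun n => if P n then !(ε n) else ε n

lemma flipIf_involutive (P : Fin N → Prop) [DecidablePred P] :
    Function.Involutive (flipIf P) := by
  intro ε; funext n; unfold flipIf; split <;> simp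

lemma sgn_flipIf (P : Fin N → Prop) [DecidablePred P] (ε : Fin N → Bool) (n : Fin N) :
    sgn (flipIf P ε) n = if P n then -(sgn ε n) else sgn ε n := by
  unfold sgn flipIf
  by_cases h : P n <;> simp [h] <;> cases ε n <;> simp

lemma sgn_flipIf_of (P : Fin N → Prop) [DecidablePred P] (ε : Fin N → Bool) {n : Fin N}
    (h : P n) : sgn (flipIf P ε) n = -(sgn ε n) := by rw [sgn_flipIf]; simp [h]

lemma sgn_flipIf_of_not (P : Fin N → Prop) [DecidablePred P] (ε : Fin N → Bool) {n : Fin N}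
    (h : ¬ P n) : sgn (flipIf P ε) n = sgn ε n := by rw [sgn_flipIf]; simp [h]

section Contraction
variable {X : Type u} [NormedAddCommGroup X] [NormedSpace ℂ X]

lemma convexOn_norm_affine (u v : X) :
    ConvexOn ℝ Set.univ (fun t : ℝ => ‖u + t • v‖) := by
  refine ⟨convex_univ, ?_⟩
  intro s _ t _ a b ha hb hab
  have h1 : a • u + b • u = u := by rw [← add_smul, hab, one_smul]
  have key : u + (a • s + b • t) • v = a • (u + s • v) + b • (u + t • v) := by
    rw [smul_add, smul_add, smul_smul, smul_smul, smul_eq_mul, smul_eq_mul,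
      add_smul]
    rw [show a • u + (a * s) • v + (b • u + (b * t) • v)
        = (a • u + b • u) + ((a * s) • v + (b * t) • v) by abel, h1]
  show ‖u + (a • s + b • t) • v‖ ≤ a • ‖u + s • v‖ + b • ‖u + t • v‖
  rw [key]
  calc ‖a • (u + s • v) + b • (u + t • v)‖
      ≤ ‖a • (u + s • v)‖ + ‖b • (u + t • v)‖ := norm_add_le _ _
    _ = a * ‖u + s • v‖ + b * ‖u + t • v‖ := by
        rw [norm_smul, norm_smul, Real.norm_eq_abs, Real.norm_eq_abs,
          abs_of_nonneg ha, abs_of_nonneg hb]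
    _ = a • ‖u + s • v‖ + b • ‖u + t • v‖ := rfl

lemma convexOn_finset_sum {ι : Type*} (s : Finset ι) {f : ι → ℝ → ℝ}
    (h : ∀ i ∈ s, ConvexOn ℝ Set.univ (f i)) :
    ConvexOn ℝ Set.univ (fun t => ∑ i ∈ s, f i t) := by
  classical
  induction s using Finset.induction_on with
  | empty => simpa using convexOn_const (0 : ℝ) convex_univ
  | insert _ _ hk ih =>
      rename_i k s'
      simp only [Finset.sum_insert hk]
      exact (h k (mem_insert_self _ _)).add (ih fun i hi => h i (mem_insert_of_mem hi))

lemma contraction_aux (y : Fin N → X) (T : Finset (Fin N)) :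
    ∀ (a : Fin N → ℝ), (∀ n, |a n| ≤ 1) → (∀ n ∉ T, a n = 1) →
    ∑ ε : Fin N → Bool, ‖∑ n : Fin N, sgn ε n • (((a n : ℝ) : ℂ) • y n)‖ ≤
      ∑ ε : Fin N → Bool, ‖∑ n : Fin N, sgn ε n • y n‖ := by
  classical
  induction T using Finset.induction_on with
  | empty =>
      intro a _ h1
      refine le_of_eq ?_
      refine Finset.sum_congr rfl fun ε _ => ?_
      congr 1
      refine Finset.sum_congr rfl fun n _ => ?_
      rw [h1 n (by simp), Complex.ofReal_one, one_smul]
  | insert _ _ hk ih =>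
      rename_i k T'
      intro a ha h1
      set F : ℝ → ℝ := fun t =>
        ∑ ε : Fin N → Bool, ‖∑ n : Fin N,
          sgn ε n • (((Function.update a k t n : ℝ) : ℂ) • y n)‖ with hF
      have hsplit : ∀ (t : ℝ) (ε : Fin N → Bool),
          (∑ n : Fin N, sgn ε n • (((Function.update a k t n : ℝ) : ℂ) • y n))
            = (∑ n ∈ Finset.univ.erase k, sgn ε n • (((a n : ℝ) : ℂ) • y n))
              + t • (sgn ε k • y k) := by
        intro t ε
        rw [← Finset.sum_erase_add _ _ (mem_univ k)]
        congr 1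
        · exact Finset.sum_congr rfl fun n hn => by
            rw [Function.update_of_ne (mem_erase.mp hn).1]
        · rw [Function.update_self, Complex.coe_smul, smul_comm]
      have hconv : ConvexOn ℝ Set.univ F := by
        rw [hF]
        refine convexOn_finset_sum _ fun ε _ => ?_
        have : (fun t : ℝ => ‖∑ n : Fin N,
            sgn ε n • (((Function.update a k t n : ℝ) : ℂ) • y n)‖)
            = fun t : ℝ => ‖(∑ n ∈ Finset.univ.erase k,
                sgn ε n • (((a n : ℝ) : ℂ) • y n)) + t • (sgn ε k • y k)‖ := by
          funext t; rw [hsplit t ε]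
        rw [this]
        exact convexOn_norm_affine _ _
      have hmem : a k ∈ segment ℝ (-1 : ℝ) 1 := by
        rw [segment_eq_Icc (by norm_num : (-1:ℝ) ≤ 1)]
        exact abs_le.mp (ha k)
      have hmax : F (a k) ≤ max (F (-1)) (F 1) :=
        hconv.le_on_segment (Set.mem_univ _) (Set.mem_univ _) hmem
      have hflip : F (-1) = F 1 := by
        have := Function.Bijective.sum_comp (flipIf_involutive (· = k)).bijective
          (fun ε : Fin N → Bool => ‖∑ n : Fin N,
            sgn ε n • (((Function.update a k (1:ℝ) n : ℝ) : ℂ) • y n)‖)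
        show (∑ ε : Fin N → Bool, ‖∑ n : Fin N,
            sgn ε n • (((Function.update a k (-1:ℝ) n : ℝ) : ℂ) • y n)‖)
          = ∑ ε : Fin N → Bool, ‖∑ n : Fin N,
              sgn ε n • (((Function.update a k (1:ℝ) n : ℝ) : ℂ) • y n)‖
        rw [← this]
        refine Finset.sum_congr rfl fun ε _ => ?_
        congr 1
        refine Finset.sum_congr rfl fun n _ => ?_
        by_cases hn : n = k
        · subst hn
          rw [Function.update_self, Function.update_self,
            sgn_flipIf_of (· = n) ε rfl]
          push_cast
          simp [neg_smul, smul_neg]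
        · rw [Function.update_of_ne hn, Function.update_of_ne hn,
            sgn_flipIf_of_not (· = k) ε hn]
      have hF1 : F 1 ≤ ∑ ε : Fin N → Bool, ‖∑ n : Fin N, sgn ε n • y n‖ := by
        refine ih (Function.update a k 1) (fun n => ?_) (fun n hn => ?_)
        · by_cases hn : n = k
          · subst hn; rw [Function.update_self]; norm_num
          · rw [Function.update_of_ne hn]; exact ha n
        · by_cases hnk : n = k
          · subst hnk; rw [Function.update_self]
          · rw [Function.update_of_ne hnk]
            exact h1 n (fun hmem' => (mem_insert.mp hmem').elim hnk hn)
      have hstart : (∑ ε : Fin N → Bool, ‖∑ n : Fin N,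
          sgn ε n • (((a n : ℝ) : ℂ) • y n)‖) = F (a k) := by
        rw [hF]; simp [Function.update_eq_self]
      rw [hstart]
      calc F (a k) ≤ max (F (-1)) (F 1) := hmax
        _ = F 1 := by rw [hflip, max_self]
        _ ≤ _ := hF1

lemma contraction_real (y : Fin N → X) (a : Fin N → ℝ) (ha : ∀ n, |a n| ≤ 1) :
    ∑ ε : Fin N → Bool, ‖∑ n : Fin N, sgn ε n • (((a n : ℝ) : ℂ) • y n)‖ ≤
      ∑ ε : Fin N → Bool, ‖∑ n : Fin N, sgn ε n • y n‖ :=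
  contraction_aux y Finset.univ a ha (fun n hn => absurd (Finset.mem_univ n) hn)

lemma contraction_complex (y : Fin N → X) (a : Fin N → ℂ) (ha : ∀ n, ‖a n‖ ≤ 1) :
    ∑ ε : Fin N → Bool, ‖∑ n : Fin N, sgn ε n • (a n • y n)‖ ≤
      2 * ∑ ε : Fin N → Bool, ‖∑ n : Fin N, sgn ε n • y n‖ := by
  classical
  have hdecomp : ∀ (ε : Fin N → Bool),
      (∑ n : Fin N, sgn ε n • (a n • y n))
        = (∑ n : Fin N, sgn ε n • (((a n).re : ℂ) • y n))
          + (∑ n : Fin N, sgn ε n • ((((a n).im : ℝ) : ℂ) • (Complex.I • y n))) := by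
    intro ε
    rw [← Finset.sum_add_distrib]
    refine Finset.sum_congr rfl fun n _ => ?_
    rw [← smul_add]
    congr 1
    rw [smul_smul, ← add_smul]
    congr 1
    exact (Complex.re_add_im (a n)).symm
  have h1 : ∑ ε : Fin N → Bool, ‖∑ n : Fin N, sgn ε n • (((a n).re : ℂ) • y n)‖ ≤
      ∑ ε : Fin N → Bool, ‖∑ n : Fin N, sgn ε n • y n‖ :=
    contraction_real y (fun n => (a n).re)
      (fun n => (Complex.abs_re_le_norm (a n)).trans (ha n))
  have h2 : ∑ ε : Fin N → Bool, ‖∑ n : Fin N,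
        sgn ε n • ((((a n).im : ℝ) : ℂ) • (Complex.I • y n))‖ ≤
      ∑ ε : Fin N → Bool, ‖∑ n : Fin N, sgn ε n • y n‖ := by
    have := contraction_real (fun n => Complex.I • y n) (fun n => (a n).im)
      (fun n => (Complex.abs_im_le_norm (a n)).trans (ha n))
    refine this.trans (le_of_eq ?_)
    refine Finset.sum_congr rfl fun ε _ => ?_
    rw [show (∑ n : Fin N, sgn ε n • Complex.I • y n)
        = Complex.I • ∑ n : Fin N, sgn ε n • y n by
      rw [Finset.smul_sum]; exact Finset.sum_congr rfl fun n _ => (smul_comm _ _ _)]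
    rw [norm_smul, Complex.norm_I, one_mul]
  calc ∑ ε : Fin N → Bool, ‖∑ n : Fin N, sgn ε n • (a n • y n)‖
      ≤ ∑ ε : Fin N → Bool, (‖∑ n : Fin N, sgn ε n • (((a n).re : ℂ) • y n)‖
          + ‖∑ n : Fin N, sgn ε n • ((((a n).im : ℝ) : ℂ) • (Complex.I • y n))‖) := by
        refine Finset.sum_le_sum fun ε _ => ?_
        rw [hdecomp ε]; exact norm_add_le _ _
    _ = (∑ ε : Fin N → Bool, ‖∑ n : Fin N, sgn ε n • (((a n).re : ℂ) • y n)‖)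
          + ∑ ε : Fin N → Bool, ‖∑ n : Fin N,
              sgn ε n • ((((a n).im : ℝ) : ℂ) • (Complex.I • y n))‖ :=
        Finset.sum_add_distrib
    _ ≤ _ := by rw [two_mul]; exact add_le_add h1 h2

end Contraction

section Kahane
variable {X : Type u} [NormedAddCommGroup X] [NormedSpace ℂ X]
variable {N : ℕ}

def S (y : Fin N → X) (ε : Fin N → Bool) : X := ∑ n : Fin N, sgn ε n • y n

def Sk (y : Fin N → X) (k : ℕ) (ε : Fin N → Bool) : X :=
  ∑ n ∈ Finset.univ.filter (fun n : Fin N => (n : ℕ) < k), sgn ε n • y n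

def Tk (y : Fin N → X) (k : ℕ) (ε : Fin N → Bool) : X :=
  ∑ n ∈ Finset.univ.filter (fun n : Fin N => ¬ (n : ℕ) < k), sgn ε n • y n

variable (y : Fin N → X)

lemma Sk_top (ε : Fin N → Bool) : Sk y N ε = S y ε := by
  unfold Sk S
  rw [Finset.filter_true_of_mem (fun n _ => n.isLt)]

lemma Sk_zero (ε : Fin N → Bool) : Sk y 0 ε = 0 := by
  unfold Sk
  rw [Finset.filter_false_of_mem (fun n _ => by simp)]
  simp

lemma S_eq_Sk_add_Tk (k : ℕ) (ε : Fin N → Bool) : S y ε = Sk y k ε + Tk y k ε := by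
  unfold S Sk Tk
  exact (Finset.sum_filter_add_sum_filter_not _ _ _).symm

lemma Sk_congr (j : ℕ) (ε ε' : Fin N → Bool)
    (h : ∀ n : Fin N, (n : ℕ) < j → ε n = ε' n) : Sk y j ε = Sk y j ε' := by
  unfold Sk
  refine Finset.sum_congr rfl fun n hn => ?_
  have := h n (Finset.mem_filter.mp hn).2
  unfold sgn; rw [this]

lemma Tk_congr (j : ℕ) (ε ε' : Fin N → Bool)
    (h : ∀ n : Fin N, ¬ (n : ℕ) < j → ε n = ε' n) : Tk y j ε = Tk y j ε' := by
  unfold Tk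
  refine Finset.sum_congr rfl fun n hn => ?_
  have := h n (Finset.mem_filter.mp hn).2
  unfold sgn; rw [this]

lemma S_add_S_flip (P : Fin N → Prop) [DecidablePred P] (ε : Fin N → Bool) :
    S y ε + S y (flipIf P ε)
      = (∑ n ∈ Finset.univ.filter (fun n => ¬ P n), sgn ε n • y n)
        + (∑ n ∈ Finset.univ.filter (fun n => ¬ P n), sgn ε n • y n) := by
  have h2 : S y (flipIf P ε)
      = (∑ n ∈ Finset.univ.filter (fun n => ¬ P n), sgn ε n • y n)
        - (∑ n ∈ Finset.univ.filter (fun n => P n), sgn ε n • y n) := by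
    unfold S
    rw [← Finset.sum_filter_add_sum_filter_not Finset.univ P
      (fun n => sgn (flipIf P ε) n • y n)]
    rw [show (∑ n ∈ Finset.univ.filter (fun n => P n), sgn (flipIf P ε) n • y n)
        = - ∑ n ∈ Finset.univ.filter (fun n => P n), sgn ε n • y n by
      rw [← Finset.sum_neg_distrib]
      exact Finset.sum_congr rfl fun n hn => by
        rw [sgn_flipIf_of P ε (Finset.mem_filter.mp hn).2, neg_smul]]
    rw [show (∑ n ∈ Finset.univ.filter (fun n => ¬ P n), sgn (flipIf P ε) n • y n)
        = ∑ n ∈ Finset.univ.filter (fun n => ¬ P n), sgn ε n • y n from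
      Finset.sum_congr rfl fun n hn => by
        rw [sgn_flipIf_of_not P ε (Finset.mem_filter.mp hn).2]]
    abel
  have h1 : S y ε
      = (∑ n ∈ Finset.univ.filter (fun n => P n), sgn ε n • y n)
        + (∑ n ∈ Finset.univ.filter (fun n => ¬ P n), sgn ε n • y n) := by
    unfold S
    exact (Finset.sum_filter_add_sum_filter_not _ _ _).symm
  rw [h1, h2]; abel

open Finset in
lemma reflection_card_le (t : ℝ) (U : Finset (Fin N → Bool))
    (σ : (Fin N → Bool) → (Fin N → Bool)) (hσ : Function.Involutive σ)
    (hU : ∀ ε ∈ U, σ ε ∈ U)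
    (h : ∀ ε ∈ U, t < ‖S y ε‖ ∨ t < ‖S y (σ ε)‖) :
    U.card ≤ 2 * (U ∩ (@Finset.filter _ (fun ε => t < ‖S y ε‖)
      (Classical.decPred _) Finset.univ)).card := by
  classical
  set E := U ∩ (@Finset.filter _ (fun ε => t < ‖S y ε‖)
      (Classical.decPred _) Finset.univ) with hE
  have hsub : U ⊆ E ∪ E.image σ := by
    intro ε hε
    rcases h ε hε with h' | h'
    · exact mem_union_left _ (by simp [hE, hε, h'])
    · refine mem_union_right _ ?_
      refine Finset.mem_image.mpr ⟨σ ε, by simp [hE, hU ε hε, h'], hσ ε⟩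
  calc U.card ≤ (E ∪ E.image σ).card := Finset.card_le_card hsub
    _ ≤ E.card + (E.image σ).card := Finset.card_union_le _ _
    _ ≤ E.card + E.card := by
        exact Nat.add_le_add_left (Finset.card_image_le) _
    _ = 2 * E.card := (two_mul _).symm

open Finset in
lemma card_mul_card_eq (k : ℕ) (A C : Finset (Fin N → Bool))
    (hA : ∀ ε ε' : Fin N → Bool, (∀ n : Fin N, (n : ℕ) < k → ε n = ε' n) →
      ε ∈ A → ε' ∈ A)
    (hC : ∀ ε ε' : Fin N → Bool, (∀ n : Fin N, ¬ (n : ℕ) < k → ε n = ε' n) →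
      ε ∈ C → ε' ∈ C) :
    A.card * C.card = (A ∩ C).card * 2 ^ N := by
  classical
  have key : (A ×ˢ C).card = ((A ∩ C) ×ˢ (Finset.univ : Finset (Fin N → Bool))).card := by
    set m : (Fin N → Bool) → (Fin N → Bool) → (Fin N → Bool) :=
      fun x y n => if (n : ℕ) < k then x n else y n with hm
    have hml : ∀ x y : Fin N → Bool, ∀ n : Fin N, (n : ℕ) < k → m x y n = x n := by
      intro x y n hn; simp [hm, hn]
    have hmr : ∀ x y : Fin N → Bool, ∀ n : Fin N, ¬ (n : ℕ) < k → m x y n = y n := by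
      intro x y n hn; simp [hm, hn]
    refine Finset.card_bij' (fun p _ => (m p.1 p.2, m p.2 p.1))
      (fun p _ => (m p.1 p.2, m p.2 p.1)) ?_ ?_ ?_ ?_
    · rintro ⟨a, c⟩ hp
      rw [Finset.mem_product] at hp
      refine Finset.mem_product.mpr ⟨Finset.mem_inter.mpr ⟨?_, ?_⟩, Finset.mem_univ _⟩
      · exact hA a _ (fun n hn => (hml a c n hn).symm) hp.1
      · exact hC c _ (fun n hn => (hmr a c n hn).symm) hp.2
    · rintro ⟨d, w⟩ hp
      rw [Finset.mem_product, Finset.mem_inter] at hp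
      refine Finset.mem_product.mpr ⟨?_, ?_⟩
      · exact hA d _ (fun n hn => (hml d w n hn).symm) hp.1.1
      · exact hC d _ (fun n hn => (hmr w d n hn).symm) hp.1.2
    · rintro ⟨a, c⟩ _
      simp only [Prod.mk.injEq]
      constructor <;> (funext n; by_cases hn : (n : ℕ) < k <;> simp [hm, hn])
    · rintro ⟨d, w⟩ _
      simp only [Prod.mk.injEq]
      constructor <;> (funext n; by_cases hn : (n : ℕ) < k <;> simp [hm, hn])
  rw [Finset.card_product, Finset.card_product] at key
  rw [key]
  congr 1
  simp

def Et (y : Fin N → X) (t : ℝ) : Finset (Fin N → Bool) :=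
  @Finset.filter _ (fun ε => t < ‖S y ε‖) (Classical.decPred _) Finset.univ

lemma mem_Et {y : Fin N → X} {t : ℝ} {ε : Fin N → Bool} :
    ε ∈ Et y t ↔ t < ‖S y ε‖ := by
  unfold Et; rw [Finset.mem_filter]; simp

def Ak (y : Fin N → X) (t : ℝ) (k : ℕ) : Finset (Fin N → Bool) :=
  @Finset.filter _ (fun ε => t < ‖Sk y k ε‖ ∧ ∀ j, j < k → ‖Sk y j ε‖ ≤ t)
    (Classical.decPred _) Finset.univ

lemma mem_Ak {y : Fin N → X} {t : ℝ} {k : ℕ} {ε : Fin N → Bool} :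
    ε ∈ Ak y t k ↔ (t < ‖Sk y k ε‖ ∧ ∀ j, j < k → ‖Sk y j ε‖ ≤ t) := by
  unfold Ak; rw [Finset.filter_congr_decidable, Finset.mem_filter]; simp

def Ck (y : Fin N → X) (t : ℝ) (k : ℕ) : Finset (Fin N → Bool) :=
  @Finset.filter _ (fun ε => t < ‖Tk y k ε‖) (Classical.decPred _) Finset.univ

lemma mem_Ck {y : Fin N → X} {t : ℝ} {k : ℕ} {ε : Fin N → Bool} :
    ε ∈ Ck y t k ↔ t < ‖Tk y k ε‖ := by
  unfold Ck; rw [Finset.mem_filter]; simp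

lemma Ak_card_le (t : ℝ) (k : ℕ) :
    (Ak y t k).card ≤ 2 * ((Ak y t k) ∩ (Et y t)).card := by
  classical
  have hinv : Function.Involutive (flipIf (fun n : Fin N => ¬ (n : ℕ) < k)) :=
    flipIf_involutive _
  have hSk : ∀ (j : ℕ), j ≤ k → ∀ ε : Fin N → Bool,
      Sk y j (flipIf (fun n : Fin N => ¬ (n : ℕ) < k) ε) = Sk y j ε := by
    intro j hj ε
    refine Sk_congr y j _ ε fun n hn => ?_
    have : (n : ℕ) < k := lt_of_lt_of_le hn hj
    simp [flipIf, this]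
  have hU : ∀ ε ∈ Ak y t k, flipIf (fun n : Fin N => ¬ (n : ℕ) < k) ε ∈ Ak y t k := by
    intro ε hε
    rw [mem_Ak] at hε ⊢
    refine ⟨by rw [hSk k le_rfl]; exact hε.1, fun j hj => ?_⟩
    rw [hSk j (le_of_lt hj)]; exact hε.2 j hj
  have hd : ∀ ε ∈ Ak y t k, t < ‖S y ε‖ ∨
      t < ‖S y (flipIf (fun n : Fin N => ¬ (n : ℕ) < k) ε)‖ := by
    intro ε hε
    by_contra hcon
    push_neg at hcon
    have hsum := S_add_S_flip y (fun n : Fin N => ¬ (n : ℕ) < k) ε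
    have hfilter : (Finset.univ.filter (fun n : Fin N => ¬ ¬ (n : ℕ) < k))
        = Finset.univ.filter (fun n : Fin N => (n : ℕ) < k) :=
      Finset.filter_congr (fun n _ => not_not)
    rw [hfilter] at hsum
    have hSkdef : (∑ n ∈ Finset.univ.filter (fun n : Fin N => (n : ℕ) < k),
        sgn ε n • y n) = Sk y k ε := rfl
    rw [hSkdef] at hsum
    have h2 : ‖S y ε + S y (flipIf (fun n : Fin N => ¬ (n : ℕ) < k) ε)‖
        = 2 * ‖Sk y k ε‖ := by
      rw [hsum, ← two_smul ℝ (Sk y k ε), norm_smul]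
      simp
    have h3 := norm_add_le (S y ε) (S y (flipIf (fun n : Fin N => ¬ (n : ℕ) < k) ε))
    rw [h2] at h3
    have h4 := (mem_Ak.mp hε).1
    linarith [hcon.1, hcon.2]
  exact reflection_card_le y t _ _ hinv hU hd

lemma Ak_disjoint (t : ℝ) {k k' : ℕ} (h : k ≠ k') :
    Disjoint (Ak y t k) (Ak y t k') := by
  rcases h.lt_or_gt with hlt | hlt
  · rw [Finset.disjoint_left]
    intro ε hε hε'
    exact absurd (mem_Ak.mp hε).1 (not_lt.mpr ((mem_Ak.mp hε').2 k hlt))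
  · rw [Finset.disjoint_right]
    intro ε hε' hε
    exact absurd (mem_Ak.mp hε').1 (not_lt.mpr ((mem_Ak.mp hε).2 k' hlt))

lemma levy_sum (t : ℝ) :
    ∑ k ∈ Finset.range (N + 1), (Ak y t k).card ≤ 2 * (Et y t).card := by
  classical
  calc ∑ k ∈ Finset.range (N + 1), (Ak y t k).card
      ≤ ∑ k ∈ Finset.range (N + 1), 2 * ((Ak y t k) ∩ (Et y t)).card :=
        Finset.sum_le_sum fun k _ => Ak_card_le y t k
    _ = 2 * ∑ k ∈ Finset.range (N + 1), ((Ak y t k) ∩ (Et y t)).card := by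
        rw [Finset.mul_sum]
    _ ≤ 2 * (Et y t).card := by
        have hdisj : ∀ k ∈ Finset.range (N+1), ∀ k' ∈ Finset.range (N+1), k ≠ k' →
            Disjoint ((Ak y t k) ∩ (Et y t)) ((Ak y t k') ∩ (Et y t)) := by
          intro k _ k' _ hkk'
          exact Finset.disjoint_of_subset_left Finset.inter_subset_left
            (Finset.disjoint_of_subset_right Finset.inter_subset_left
              (Ak_disjoint y t hkk'))
        rw [← Finset.card_biUnion hdisj]
        refine Nat.mul_le_mul_left 2 (Finset.card_le_card ?_)
        intro ε hε
        rcases Finset.mem_biUnion.mp hε with ⟨k, _, hk⟩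
        exact (Finset.mem_inter.mp hk).2

lemma Ck_card_le (t : ℝ) (k : ℕ) : (Ck y t k).card ≤ 2 * (Et y t).card := by
  classical
  have hinv : Function.Involutive (flipIf (fun n : Fin N => (n : ℕ) < k)) :=
    flipIf_involutive _
  have hTk : ∀ ε : Fin N → Bool,
      Tk y k (flipIf (fun n : Fin N => (n : ℕ) < k) ε) = Tk y k ε := by
    intro ε
    refine Tk_congr y k _ ε fun n hn => ?_
    simp [flipIf, hn]
  have hU : ∀ ε ∈ Ck y t k, flipIf (fun n : Fin N => (n : ℕ) < k) ε ∈ Ck y t k := by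
    intro ε hε
    rw [mem_Ck] at hε ⊢
    rw [hTk]; exact hε
  have hd : ∀ ε ∈ Ck y t k, t < ‖S y ε‖ ∨
      t < ‖S y (flipIf (fun n : Fin N => (n : ℕ) < k) ε)‖ := by
    intro ε hε
    by_contra hcon
    push_neg at hcon
    have hsum := S_add_S_flip y (fun n : Fin N => (n : ℕ) < k) ε
    have hTkdef : (∑ n ∈ Finset.univ.filter (fun n : Fin N => ¬ (n : ℕ) < k),
        sgn ε n • y n) = Tk y k ε := rfl
    rw [hTkdef] at hsum
    have h2 : ‖S y ε + S y (flipIf (fun n : Fin N => (n : ℕ) < k) ε)‖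
        = 2 * ‖Tk y k ε‖ := by
      rw [hsum, ← two_smul ℝ (Tk y k ε), norm_smul]
      simp
    have h3 := norm_add_le (S y ε) (S y (flipIf (fun n : Fin N => (n : ℕ) < k) ε))
    rw [h2] at h3
    have h4 := mem_Ck.mp hε
    linarith [hcon.1, hcon.2]
  have := reflection_card_le y t _ _ hinv hU hd
  refine this.trans ?_
  exact Nat.mul_le_mul_left 2 (Finset.card_le_card Finset.inter_subset_right)

lemma Sk_succ (j : ℕ) (hj : j < N) (ε : Fin N → Bool) :
    Sk y (j + 1) ε = Sk y j ε + sgn ε ⟨j, hj⟩ • y ⟨j, hj⟩ := by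
  classical
  have hfil : Finset.univ.filter (fun n : Fin N => (n : ℕ) < j + 1)
      = insert (⟨j, hj⟩ : Fin N) (Finset.univ.filter (fun n : Fin N => (n : ℕ) < j)) := by
    ext n
    simp only [Finset.mem_filter, Finset.mem_univ, true_and, Finset.mem_insert]
    rw [Nat.lt_succ_iff_lt_or_eq]
    constructor
    · rintro (h | h)
      · exact Or.inr h
      · exact Or.inl (Fin.ext h)
    · rintro (h | h)
      · exact Or.inr (by rw [h])
      · exact Or.inl h
  unfold Sk
  rw [hfil, Finset.sum_insert (by simp)]
  abel

lemma norm_Sk_succ_le (j : ℕ) (hj : j < N) (ε : Fin N → Bool) {t M : ℝ}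
    (h1 : ‖Sk y j ε‖ ≤ t) (hM : ∀ n, ‖y n‖ ≤ M) : ‖Sk y (j+1) ε‖ ≤ t + M := by
  rw [Sk_succ y j hj ε]
  refine (norm_add_le _ _).trans ?_
  have := sgn_smul_norm ε ⟨j, hj⟩ (y ⟨j, hj⟩)
  rw [this]
  exact add_le_add h1 (hM _)

lemma cover (t M : ℝ) (ht : 0 ≤ t) (hM0 : 0 ≤ M) (hM : ∀ n, ‖y n‖ ≤ M) :
    Et y (2 * t + M) ⊆ (Finset.range (N + 1)).biUnion
      (fun k => (Ak y t k) ∩ (Ck y t k)) := by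
  classical
  intro ε hε
  rw [mem_Et] at hε
  have hex : ∃ k, t < ‖Sk y k ε‖ := by
    refine ⟨N, ?_⟩
    rw [Sk_top]
    linarith
  set k := Nat.find hex with hk
  have hkspec : t < ‖Sk y k ε‖ := Nat.find_spec hex
  have hkmin : ∀ j, j < k → ‖Sk y j ε‖ ≤ t := fun j hj =>
    le_of_not_gt (Nat.find_min hex hj)
  have hkN : k ≤ N := Nat.find_min' hex (by rw [Sk_top]; linarith)
  have hkpos : 1 ≤ k := by
    by_contra h
    push_neg at h
    interval_cases k
    rw [Sk_zero, norm_zero] at hkspec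
    linarith
  have hSkk : ‖Sk y k ε‖ ≤ t + M := by
    obtain ⟨j, hkj⟩ : ∃ j, k = j + 1 := ⟨k - 1, (Nat.succ_pred_eq_of_pos hkpos).symm⟩
    rw [hkj]
    have hjN : j < N := by omega
    exact norm_Sk_succ_le y j hjN ε (hkmin j (by omega)) hM
  refine Finset.mem_biUnion.mpr ⟨k, Finset.mem_range.mpr (Nat.lt_succ_of_le hkN), ?_⟩
  refine Finset.mem_inter.mpr ⟨mem_Ak.mpr ⟨hkspec, hkmin⟩, mem_Ck.mpr ?_⟩
  have hTkeq : Tk y k ε = S y ε - Sk y k ε := by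
    rw [S_eq_Sk_add_Tk y k ε]; abel
  have : ‖S y ε‖ ≤ ‖Sk y k ε‖ + ‖Tk y k ε‖ := by
    rw [S_eq_Sk_add_Tk y k ε]; exact norm_add_le _ _
  linarith

lemma squaring (t M : ℝ) (ht : 0 ≤ t) (hM0 : 0 ≤ M) (hM : ∀ n, ‖y n‖ ≤ M) :
    (Et y (2 * t + M)).card * 2 ^ N ≤ 4 * (Et y t).card ^ 2 := by
  classical
  have h1 : (Et y (2 * t + M)).card ≤
      ∑ k ∈ Finset.range (N + 1), ((Ak y t k) ∩ (Ck y t k)).card :=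
    (Finset.card_le_card (cover y t M ht hM0 hM)).trans (Finset.card_biUnion_le)
  have h2 : ∀ k, ((Ak y t k) ∩ (Ck y t k)).card * 2 ^ N
      = (Ak y t k).card * (Ck y t k).card := by
    intro k
    refine (card_mul_card_eq k (Ak y t k) (Ck y t k) ?_ ?_).symm
    · intro ε ε' hagree hε
      rw [mem_Ak] at hε ⊢
      have hcongr : ∀ j, j ≤ k → Sk y j ε' = Sk y j ε := fun j hj =>
        Sk_congr y j ε' ε fun n hn => (hagree n (lt_of_lt_of_le hn hj)).symm
      exact ⟨by rw [hcongr k le_rfl]; exact hε.1,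
        fun j hj => by rw [hcongr j (le_of_lt hj)]; exact hε.2 j hj⟩
    · intro ε ε' hagree hε
      rw [mem_Ck] at hε ⊢
      rw [Tk_congr y k ε' ε fun n hn => (hagree n hn).symm]
      exact hε
  calc (Et y (2 * t + M)).card * 2 ^ N
      ≤ (∑ k ∈ Finset.range (N + 1), ((Ak y t k) ∩ (Ck y t k)).card) * 2 ^ N :=
        Nat.mul_le_mul_right _ h1
    _ = ∑ k ∈ Finset.range (N + 1), ((Ak y t k) ∩ (Ck y t k)).card * 2 ^ N := by
        rw [Finset.sum_mul]
    _ = ∑ k ∈ Finset.range (N + 1), (Ak y t k).card * (Ck y t k).card := by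
        exact Finset.sum_congr rfl fun k _ => h2 k
    _ ≤ ∑ k ∈ Finset.range (N + 1), (Ak y t k).card * (2 * (Et y t).card) :=
        Finset.sum_le_sum fun k _ => Nat.mul_le_mul_left _ (Ck_card_le y t k)
    _ = (∑ k ∈ Finset.range (N + 1), (Ak y t k).card) * (2 * (Et y t).card) := by
        rw [Finset.sum_mul]
    _ ≤ (2 * (Et y t).card) * (2 * (Et y t).card) :=
        Nat.mul_le_mul_right _ (levy_sum y t)
    _ = 4 * (Et y t).card ^ 2 := by ring

lemma norm_y_le_avg (n : Fin N) :
    ‖y n‖ ≤ (2 ^ N : ℝ)⁻¹ * ∑ ε : Fin N → Bool, ‖S y ε‖ := by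
  classical
  have key : ∀ ε : Fin N → Bool, 2 * ‖y n‖ ≤ ‖S y ε‖ + ‖S y (flipIf (· = n) ε)‖ := by
    intro ε
    have h1 : S y ε = (∑ m ∈ Finset.univ.erase n, sgn ε m • y m) + sgn ε n • y n := by
      unfold S
      rw [← Finset.sum_erase_add _ _ (Finset.mem_univ n)]
    have h2 : S y (flipIf (· = n) ε)
        = (∑ m ∈ Finset.univ.erase n, sgn ε m • y m) - sgn ε n • y n := by
      unfold S
      rw [← Finset.sum_erase_add _ _ (Finset.mem_univ n)]
      rw [sgn_flipIf_of (· = n) ε rfl, neg_smul]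
      rw [show (∑ m ∈ Finset.univ.erase n, sgn (flipIf (· = n) ε) m • y m)
          = ∑ m ∈ Finset.univ.erase n, sgn ε m • y m from
        Finset.sum_congr rfl fun m hm => by
          rw [sgn_flipIf_of_not (· = n) ε (Finset.mem_erase.mp hm).1]]
      abel
    have h3 : S y ε - S y (flipIf (· = n) ε) = sgn ε n • y n + sgn ε n • y n := by
      rw [h1, h2]; abel
    have h4 : ‖S y ε - S y (flipIf (· = n) ε)‖ = 2 * ‖y n‖ := by
      rw [h3, ← two_smul ℝ, norm_smul]
      rw [sgn_smul_norm]
      simp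
    calc 2 * ‖y n‖ = ‖S y ε - S y (flipIf (· = n) ε)‖ := h4.symm
      _ ≤ ‖S y ε‖ + ‖S y (flipIf (· = n) ε)‖ := norm_sub_le _ _
  have hsumflip : ∑ ε : Fin N → Bool, ‖S y (flipIf (· = n) ε)‖
      = ∑ ε : Fin N → Bool, ‖S y ε‖ :=
    Function.Bijective.sum_comp (flipIf_involutive (· = n)).bijective
      (fun ε => ‖S y ε‖)
  have hsum : (2 ^ N : ℝ) * (2 * ‖y n‖) ≤ 2 * ∑ ε : Fin N → Bool, ‖S y ε‖ := by
    calc (2 ^ N : ℝ) * (2 * ‖y n‖)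
        = ∑ _ε : Fin N → Bool, 2 * ‖y n‖ := by
          rw [Finset.sum_const, Finset.card_univ]
          simp [nsmul_eq_mul]
      _ ≤ ∑ ε : Fin N → Bool, (‖S y ε‖ + ‖S y (flipIf (· = n) ε)‖) :=
          Finset.sum_le_sum fun ε _ => key ε
      _ = 2 * ∑ ε : Fin N → Bool, ‖S y ε‖ := by
          rw [Finset.sum_add_distrib, hsumflip, two_mul]
  have hpow : (0:ℝ) < 2 ^ N := by positivity
  rw [inv_mul_eq_div, le_div_iff₀ hpow]
  nlinarith [hsum]

lemma markov (t : ℝ) :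
    ((Et y t).card : ℝ) * t ≤ ∑ ε : Fin N → Bool, ‖S y ε‖ := by
  classical
  calc ((Et y t).card : ℝ) * t = ∑ _ε ∈ Et y t, t := by
        rw [Finset.sum_const, nsmul_eq_mul]
    _ ≤ ∑ ε ∈ Et y t, ‖S y ε‖ :=
        Finset.sum_le_sum fun ε hε => le_of_lt (mem_Et.mp hε)
    _ ≤ ∑ ε : Fin N → Bool, ‖S y ε‖ :=
        Finset.sum_le_sum_of_subset_of_nonneg (Finset.subset_univ _)
          (fun ε _ _ => norm_nonneg _)

/-- the thresholds for the doubling iteration -/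
noncomputable def tj (M : ℝ) (j : ℕ) : ℝ := (9 * 2 ^ j - 1) * M

lemma tj_step (M : ℝ) (j : ℕ) : 2 * tj M j + M = tj M (j + 1) := by
  unfold tj; ring

lemma tj_nonneg {M : ℝ} (hM : 0 ≤ M) (j : ℕ) : 0 ≤ tj M j := by
  unfold tj
  have : (1:ℝ) ≤ 2 ^ j := one_le_pow₀ (by norm_num)
  nlinarith

lemma tj_mono {M : ℝ} (hM : 0 ≤ M) {j j' : ℕ} (h : j ≤ j') : tj M j ≤ tj M j' := by
  unfold tj
  have : (2:ℝ) ^ j ≤ 2 ^ j' := pow_le_pow_right₀ (by norm_num) h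
  nlinarith

lemma iteration (M : ℝ) (hMpos : 0 < M)
    (hsum : ∑ ε : Fin N → Bool, ‖S y ε‖ = (2:ℝ) ^ N * M)
    (hMdef : ∀ n, ‖y n‖ ≤ M) :
    ∀ j : ℕ, 4 * (Et y (tj M j)).card * 2 ^ (2 ^ j) ≤ 2 ^ N := by
  classical
  have hM0 : 0 ≤ M := le_of_lt hMpos
  intro j
  induction j with
  | zero =>
      have ht0 : tj M 0 = 8 * M := by unfold tj; ring
      rw [ht0]
      have hm := markov y (8 * M)
      rw [hsum] at hm
      have h8 : ((Et y (8 * M)).card : ℝ) * 8 * M ≤ 2 ^ N * M := by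
        rw [mul_assoc]; exact hm
      have hq : ((Et y (8 * M)).card : ℝ) * 8 ≤ 2 ^ N :=
        le_of_mul_le_mul_right h8 hMpos
      have : ((4 * (Et y (8 * M)).card * 2 ^ (2 ^ 0) : ℕ) : ℝ) ≤ ((2 ^ N : ℕ) : ℝ) := by
        push_cast
        linarith [hq]
      exact_mod_cast this
  | succ j ih =>
      have hsq := squaring y (tj M j) M (tj_nonneg hM0 j) hM0 hMdef
      rw [tj_step] at hsq
      have h2N : 0 < 2 ^ N := Nat.pow_pos (by norm_num)
      refine Nat.le_of_mul_le_mul_right ?_ h2N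
      calc 4 * (Et y (tj M (j+1))).card * 2 ^ (2 ^ (j+1)) * 2 ^ N
          = 4 * 2 ^ (2 ^ (j+1)) * ((Et y (tj M (j+1))).card * 2 ^ N) := by ring
        _ ≤ 4 * 2 ^ (2 ^ (j+1)) * (4 * (Et y (tj M j)).card ^ 2) :=
            Nat.mul_le_mul_left _ hsq
        _ = (4 * (Et y (tj M j)).card * 2 ^ (2 ^ j)) ^ 2 := by
            rw [pow_succ 2 j, pow_mul]
            ring
        _ ≤ (2 ^ N) ^ 2 := Nat.pow_le_pow_left ih 2
        _ = 2 ^ N * 2 ^ N := sq (2 ^ N)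

end Kahane

section KahaneMoment

lemma sq_le_two_pow : ∀ j : ℕ, 4 ≤ j → j * j ≤ 2 ^ j := by
  intro j
  induction j with
  | zero => omega
  | succ j ih =>
      intro hj
      rcases Nat.lt_or_ge j 4 with h | h
      · have hj3 : j = 3 := by omega
        subst hj3; norm_num
      · have h1 := ih h
        have h2 : 2 * j + 1 ≤ j * j := by nlinarith
        calc (j+1) * (j+1) = j * j + (2 * j + 1) := by ring
          _ ≤ 2 ^ j + 2 ^ j := add_le_add h1 (h2.trans h1)
          _ = 2 ^ (j + 1) := by rw [pow_succ]; ring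

lemma geo (m : ℕ) : ∑ j ∈ Finset.range m, ((1:ℝ)/2) ^ j ≤ 2 := by
  rw [geom_sum_eq (by norm_num : ((1:ℝ)/2) ≠ 1)]
  rw [div_le_iff_of_neg (by norm_num : ((1:ℝ)/2 - 1) < 0)]
  have h1 : (0:ℝ) ≤ (1/2 : ℝ) ^ m := by positivity
  nlinarith

def j0 (p : ℝ) : ℕ := ⌈p⌉₊ + 4

noncomputable def Dp (p : ℝ) : ℝ := (j0 p : ℝ) * ((2:ℝ) ^ (j0 p)) ^ p + 2

noncomputable def Kp (p : ℝ) : ℝ := 18 * (1 + Dp p)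

lemma Dp_nonneg {p : ℝ} (hp : 1 ≤ p) : 0 ≤ Dp p := by
  unfold Dp
  have : (0:ℝ) ≤ ((2:ℝ) ^ (j0 p)) ^ p := Real.rpow_nonneg (by positivity) _
  positivity

lemma Kp_ge_one {p : ℝ} (hp : 1 ≤ p) : 1 ≤ Kp p := by
  unfold Kp
  nlinarith [Dp_nonneg hp]

lemma gj_le (p : ℝ) (hp : 1 ≤ p) {j : ℕ} (hj : j0 p + 1 ≤ j) :
    ((2:ℝ) ^ j) ^ p * ((2:ℝ) ^ (2 ^ j))⁻¹ ≤ ((1:ℝ)/2) ^ j := by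
  have h2 : (0:ℝ) < 2 := by norm_num
  have e1 : ((2:ℝ) ^ j) ^ p = (2:ℝ) ^ ((j:ℝ) * p) := by
    rw [← Real.rpow_natCast 2 j, ← Real.rpow_mul (le_of_lt h2)]
  have e2 : ((2:ℝ) ^ (2 ^ j))⁻¹ = (2:ℝ) ^ (-(((2 ^ j : ℕ)) : ℝ)) := by
    rw [Real.rpow_neg (le_of_lt h2), Real.rpow_natCast]
  have e3 : ((1:ℝ)/2) ^ j = (2:ℝ) ^ (-(j:ℝ)) := by
    rw [Real.rpow_neg (le_of_lt h2), Real.rpow_natCast]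
    rw [one_div, inv_pow]
  rw [e1, e2, e3, ← Real.rpow_add h2]
  apply Real.rpow_le_rpow_of_exponent_le (by norm_num)
  have hj4 : 4 ≤ j := by unfold j0 at hj; omega
  have hsq := sq_le_two_pow j hj4
  have hsq' : (j:ℝ) * (j:ℝ) ≤ (((2 ^ j : ℕ)) : ℝ) := by exact_mod_cast hsq
  have hpj : p + 1 ≤ (j:ℝ) := by
    have h1 : p ≤ (⌈p⌉₊ : ℝ) := Nat.le_ceil p
    have h2' : (⌈p⌉₊ : ℝ) + 5 ≤ (j:ℝ) := by
      have : ⌈p⌉₊ + 5 ≤ j := by unfold j0 at hj; omega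
      exact_mod_cast this
    linarith
  have hj0 : (0:ℝ) ≤ (j:ℝ) := Nat.cast_nonneg j
  nlinarith

lemma gsum (p : ℝ) (hp : 1 ≤ p) (N : ℕ) :
    ∑ j ∈ Finset.Icc 1 N, ((2:ℝ) ^ j) ^ p * ((2:ℝ) ^ (2 ^ j))⁻¹ ≤ Dp p := by
  classical
  rw [← Finset.sum_filter_add_sum_filter_not (Finset.Icc 1 N) (fun j => j ≤ j0 p)]
  unfold Dp
  have hhead : ∑ j ∈ (Finset.Icc 1 N).filter (fun j => j ≤ j0 p),
      ((2:ℝ) ^ j) ^ p * ((2:ℝ) ^ (2 ^ j))⁻¹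
      ≤ (j0 p : ℝ) * ((2:ℝ) ^ (j0 p)) ^ p := by
    have hterm : ∀ j ∈ (Finset.Icc 1 N).filter (fun j => j ≤ j0 p),
        ((2:ℝ) ^ j) ^ p * ((2:ℝ) ^ (2 ^ j))⁻¹ ≤ ((2:ℝ) ^ (j0 p)) ^ p := by
      intro j hj
      have hjle := (Finset.mem_filter.mp hj).2
      have h1 : ((2:ℝ) ^ (2 ^ j))⁻¹ ≤ 1 := by
        rw [inv_le_one_iff₀]
        right
        exact one_le_pow₀ (by norm_num)
      have h2 : (0:ℝ) ≤ ((2:ℝ) ^ j) ^ p := Real.rpow_nonneg (by positivity) _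
      calc ((2:ℝ) ^ j) ^ p * ((2:ℝ) ^ (2 ^ j))⁻¹ ≤ ((2:ℝ) ^ j) ^ p * 1 :=
            mul_le_mul_of_nonneg_left h1 h2
        _ = ((2:ℝ) ^ j) ^ p := mul_one _
        _ ≤ ((2:ℝ) ^ (j0 p)) ^ p :=
            Real.rpow_le_rpow (by positivity)
              (pow_le_pow_right₀ (by norm_num) hjle) (by linarith)
    calc ∑ j ∈ (Finset.Icc 1 N).filter (fun j => j ≤ j0 p),
          ((2:ℝ) ^ j) ^ p * ((2:ℝ) ^ (2 ^ j))⁻¹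
        ≤ ((Finset.Icc 1 N).filter (fun j => j ≤ j0 p)).card • ((2:ℝ) ^ (j0 p)) ^ p :=
          Finset.sum_le_card_nsmul _ _ _ hterm
      _ ≤ (j0 p : ℝ) * ((2:ℝ) ^ (j0 p)) ^ p := by
          rw [nsmul_eq_mul]
          refine mul_le_mul_of_nonneg_right ?_ (Real.rpow_nonneg (by positivity) _)
          have hsub : (Finset.Icc 1 N).filter (fun j => j ≤ j0 p) ⊆ Finset.Icc 1 (j0 p) := by
            intro j hj
            rw [Finset.mem_filter, Finset.mem_Icc] at hj
            rw [Finset.mem_Icc]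
            exact ⟨hj.1.1, hj.2⟩
          have := Finset.card_le_card hsub
          rw [Nat.card_Icc] at this
          exact_mod_cast this.trans (by omega)
  have htail : ∑ j ∈ (Finset.Icc 1 N).filter (fun j => ¬ j ≤ j0 p),
      ((2:ℝ) ^ j) ^ p * ((2:ℝ) ^ (2 ^ j))⁻¹ ≤ 2 := by
    calc ∑ j ∈ (Finset.Icc 1 N).filter (fun j => ¬ j ≤ j0 p),
          ((2:ℝ) ^ j) ^ p * ((2:ℝ) ^ (2 ^ j))⁻¹
        ≤ ∑ j ∈ (Finset.Icc 1 N).filter (fun j => ¬ j ≤ j0 p), ((1:ℝ)/2) ^ j := by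
          refine Finset.sum_le_sum fun j hj => ?_
          have := (Finset.mem_filter.mp hj).2
          exact gj_le p hp (by omega)
      _ ≤ ∑ j ∈ Finset.range (N+1), ((1:ℝ)/2) ^ j := by
          refine Finset.sum_le_sum_of_subset_of_nonneg ?_ (fun j _ _ => by positivity)
          intro j hj
          rw [Finset.mem_filter, Finset.mem_Icc] at hj
          rw [Finset.mem_range]
          omega
      _ ≤ 2 := geo (N+1)
  linarith

end KahaneMoment

section KahaneMain
variable {X : Type u} [NormedAddCommGroup X] [NormedSpace ℂ X] {N : ℕ} (y : Fin N → X)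

lemma norm_S_le (ε : Fin N → Bool) : ‖S y ε‖ ≤ ∑ n : Fin N, ‖y n‖ := by
  unfold S
  refine (norm_sum_le _ _).trans (le_of_eq ?_)
  exact Finset.sum_congr rfl fun n _ => sgn_smul_norm ε n (y n)

lemma layer (p : ℝ) (hp : 1 ≤ p) {M : ℝ} (hM0 : 0 ≤ M) (ε : Fin N → Bool)
    (hb : ‖S y ε‖ ≤ tj M (N + 1)) :
    ‖S y ε‖ ^ p ≤ tj M 1 ^ p
      + ∑ j ∈ Finset.Icc 1 N, (if tj M j < ‖S y ε‖ then tj M (j+1) ^ p else 0) := by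
  classical
  have hp0 : (0:ℝ) ≤ p := by linarith
  have hite : ∀ j ∈ Finset.Icc 1 N,
      (0:ℝ) ≤ (if tj M j < ‖S y ε‖ then tj M (j+1) ^ p else 0) := by
    intro j _
    split
    · exact Real.rpow_nonneg (tj_nonneg hM0 _) _
    · exact le_refl 0
  rcases le_or_gt ‖S y ε‖ (tj M 1) with hle | hlt
  · have h1 : ‖S y ε‖ ^ p ≤ tj M 1 ^ p :=
      Real.rpow_le_rpow (norm_nonneg _) hle hp0
    have h2 : (0:ℝ) ≤ ∑ j ∈ Finset.Icc 1 N,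
        (if tj M j < ‖S y ε‖ then tj M (j+1) ^ p else 0) :=
      Finset.sum_nonneg hite
    linarith
  · have hN : 1 ≤ N := by
      by_contra hN
      push_neg at hN
      interval_cases N
      have : S y ε = 0 := by unfold S; simp
      rw [this, norm_zero] at hlt
      exact absurd hlt (not_lt.mpr (tj_nonneg hM0 1))
    set T := (Finset.Icc 1 N).filter (fun j => tj M j < ‖S y ε‖) with hT
    have hne : T.Nonempty := ⟨1, by
      rw [hT, Finset.mem_filter, Finset.mem_Icc]
      exact ⟨⟨le_rfl, hN⟩, hlt⟩⟩
    set js := T.max' hne with hjs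
    have hjsT : js ∈ T := T.max'_mem hne
    have hjsIcc : js ∈ Finset.Icc 1 N := (Finset.mem_filter.mp hjsT).1
    have hjslt : tj M js < ‖S y ε‖ := (Finset.mem_filter.mp hjsT).2
    have hjsN : js ≤ N := (Finset.mem_Icc.mp hjsIcc).2
    have hup : ‖S y ε‖ ≤ tj M (js + 1) := by
      rcases eq_or_lt_of_le hjsN with heq | hlt'
      · rw [heq]; exact hb
      · by_contra hcon
        push_neg at hcon
        have : js + 1 ∈ T := by
          rw [hT, Finset.mem_filter, Finset.mem_Icc]
          exact ⟨⟨by omega, by omega⟩, hcon⟩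
        have := T.le_max' _ this
        omega
    calc ‖S y ε‖ ^ p ≤ tj M (js + 1) ^ p :=
          Real.rpow_le_rpow (norm_nonneg _) hup hp0
      _ = (if tj M js < ‖S y ε‖ then tj M (js+1) ^ p else 0) := by rw [if_pos hjslt]
      _ ≤ ∑ j ∈ Finset.Icc 1 N, (if tj M j < ‖S y ε‖ then tj M (j+1) ^ p else 0) :=
          Finset.single_le_sum hite hjsIcc
      _ ≤ _ := le_add_of_nonneg_left (Real.rpow_nonneg (tj_nonneg hM0 1) p)

theorem kahane_moment (p : ℝ) (hp : 1 ≤ p) :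
    (2 ^ N : ℝ)⁻¹ * ∑ ε : Fin N → Bool, ‖S y ε‖ ^ p
      ≤ (Kp p * ((2 ^ N : ℝ)⁻¹ * ∑ ε : Fin N → Bool, ‖S y ε‖)) ^ p := by
  classical
  have hp0 : (0:ℝ) ≤ p := by linarith
  have hpne : p ≠ 0 := by linarith
  set M := (2 ^ N : ℝ)⁻¹ * ∑ ε : Fin N → Bool, ‖S y ε‖ with hM
  have hpowpos : (0:ℝ) < 2 ^ N := by positivity
  have hM0 : 0 ≤ M := by
    rw [hM]
    exact mul_nonneg (by positivity) (Finset.sum_nonneg fun ε _ => norm_nonneg _)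
  rcases eq_or_lt_of_le hM0 with hM0' | hMpos
  · -- M = 0: every S ε = 0
    have hsum0 : ∑ ε : Fin N → Bool, ‖S y ε‖ = 0 := by
      have := hM0'.symm
      rw [hM] at this
      field_simp at this
      simpa using this
    have hSe : ∀ ε : Fin N → Bool, ‖S y ε‖ = 0 := by
      intro ε
      have := (Finset.sum_eq_zero_iff_of_nonneg
        (fun ε _ => norm_nonneg (S y ε))).mp hsum0
      exact this ε (Finset.mem_univ ε)
    have hL : ∑ ε : Fin N → Bool, ‖S y ε‖ ^ p = 0 := by
      refine Finset.sum_eq_zero fun ε _ => ?_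
      rw [hSe ε, Real.zero_rpow hpne]
    rw [hL, mul_zero, ← hM0', mul_zero, Real.zero_rpow hpne]
  · -- main case
    have hyM : ∀ n, ‖y n‖ ≤ M := fun n => norm_y_le_avg y n
    have hsumM : ∑ ε : Fin N → Bool, ‖S y ε‖ = (2:ℝ) ^ N * M := by
      rw [hM]
      field_simp
    have hiter := iteration y M hMpos hsumM hyM
    have hq : ∀ j : ℕ, ((Et y (tj M j)).card : ℝ) * (2 ^ N : ℝ)⁻¹
        ≤ (1/4) * ((2:ℝ) ^ (2 ^ j))⁻¹ := by
      intro j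
      have hnat := hiter j
      have hreal : (4:ℝ) * ((Et y (tj M j)).card : ℝ) * (2:ℝ) ^ (2 ^ j)
          ≤ (2:ℝ) ^ N := by exact_mod_cast hnat
      have h1 : ((Et y (tj M j)).card : ℝ) / (2:ℝ) ^ N
          ≤ 1 / (4 * (2:ℝ) ^ (2 ^ j)) := by
        rw [div_le_div_iff₀ hpowpos (by positivity)]
        nlinarith [hreal]
      rw [← div_eq_mul_inv]
      refine h1.trans (le_of_eq ?_)
      field_simp
    -- pointwise bound on ‖S y ε‖
    have hbb : ∀ ε : Fin N → Bool, ‖S y ε‖ ≤ tj M (N + 1) := by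
      intro ε
      have h1 : ‖S y ε‖ ≤ ∑ n : Fin N, ‖y n‖ := norm_S_le y ε
      have h2 : ∑ n : Fin N, ‖y n‖ ≤ (N : ℝ) * M := by
        calc ∑ n : Fin N, ‖y n‖ ≤ (Finset.univ : Finset (Fin N)).card • M :=
              Finset.sum_le_card_nsmul _ _ _ (fun n _ => hyM n)
          _ = (N : ℝ) * M := by rw [Finset.card_univ, Fintype.card_fin, nsmul_eq_mul]
      have hN2 : (N:ℝ) ≤ (2:ℝ) ^ N := by
        exact_mod_cast (Nat.lt_two_pow_self (n := N)).le
      have h3 : (N : ℝ) * M ≤ tj M (N + 1) := by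
        unfold tj
        have hpow2 : (2:ℝ) ^ (N+1) = 2 * 2 ^ N := by rw [pow_succ]; ring
        have h4 : (N:ℝ) * M ≤ (2:ℝ) ^ N * M := mul_le_mul_of_nonneg_right hN2 hM0
        have h5 : (0:ℝ) ≤ (2:ℝ) ^ N * M := by positivity
        have h6 : (1:ℝ) * M ≤ (2:ℝ) ^ N * M :=
          mul_le_mul_of_nonneg_right (one_le_pow₀ (by norm_num)) hM0
        rw [hpow2]
        nlinarith [h4, h5, h6]
      linarith
    have hlayer := fun ε => layer y p hp hM0 ε (hbb ε)
    have hcount : ∀ j : ℕ, ∑ ε : Fin N → Bool,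
        (if tj M j < ‖S y ε‖ then tj M (j+1) ^ p else 0)
        = ((Et y (tj M j)).card : ℝ) * tj M (j+1) ^ p := by
      intro j
      rw [← Finset.sum_filter, Finset.sum_const, nsmul_eq_mul]
      congr 2
    have havg : (2 ^ N : ℝ)⁻¹ * ∑ ε : Fin N → Bool, ‖S y ε‖ ^ p
        ≤ tj M 1 ^ p + ∑ j ∈ Finset.Icc 1 N,
            ((Et y (tj M j)).card : ℝ) * (2 ^ N : ℝ)⁻¹ * tj M (j+1) ^ p := by
      have h1 : ∑ ε : Fin N → Bool, ‖S y ε‖ ^ p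
          ≤ ∑ ε : Fin N → Bool, (tj M 1 ^ p + ∑ j ∈ Finset.Icc 1 N,
              (if tj M j < ‖S y ε‖ then tj M (j+1) ^ p else 0)) :=
        Finset.sum_le_sum fun ε _ => hlayer ε
      have h2 : ∑ ε : Fin N → Bool, (tj M 1 ^ p + ∑ j ∈ Finset.Icc 1 N,
            (if tj M j < ‖S y ε‖ then tj M (j+1) ^ p else 0))
          = (2:ℝ) ^ N * tj M 1 ^ p + ∑ j ∈ Finset.Icc 1 N,
              ((Et y (tj M j)).card : ℝ) * tj M (j+1) ^ p := by
        rw [Finset.sum_add_distrib, Finset.sum_const, Finset.card_univ, Finset.sum_comm]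
        congr 1
        · rw [nsmul_eq_mul]
          congr 1
          simp
        · exact Finset.sum_congr rfl fun j _ => hcount j
      have h3 := mul_le_mul_of_nonneg_left (h1.trans (le_of_eq h2))
        (le_of_lt (inv_pos.mpr hpowpos))
      refine h3.trans (le_of_eq ?_)
      rw [mul_add, ← mul_assoc, inv_mul_cancel₀ (ne_of_gt hpowpos), one_mul,
        Finset.mul_sum]
      congr 1
      exact Finset.sum_congr rfl fun j _ => by ring
    -- bound the sum
    have hterm : ∀ j ∈ Finset.Icc 1 N,
        ((Et y (tj M j)).card : ℝ) * (2 ^ N : ℝ)⁻¹ * tj M (j+1) ^ p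
          ≤ (18 * M) ^ p * (1/4) * (((2:ℝ) ^ j) ^ p * ((2:ℝ) ^ (2 ^ j))⁻¹) := by
      intro j _
      have h1 : tj M (j+1) ≤ 18 * M * (2:ℝ) ^ j := by
        unfold tj
        have hpow2 : (2:ℝ) ^ (j+1) = 2 * 2 ^ j := by rw [pow_succ]; ring
        nlinarith [hM0, one_le_pow₀ (by norm_num : (1:ℝ) ≤ 2) (n := j)]
      have h2 : tj M (j+1) ^ p ≤ (18 * M * (2:ℝ) ^ j) ^ p :=
        Real.rpow_le_rpow (tj_nonneg hM0 _) h1 hp0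
      have h3 : (18 * M * (2:ℝ) ^ j) ^ p = (18 * M) ^ p * ((2:ℝ) ^ j) ^ p :=
        Real.mul_rpow (by positivity) (by positivity)
      have h4 : ((Et y (tj M j)).card : ℝ) * (2 ^ N : ℝ)⁻¹ * tj M (j+1) ^ p
          ≤ ((1/4) * ((2:ℝ) ^ (2 ^ j))⁻¹) * ((18 * M) ^ p * ((2:ℝ) ^ j) ^ p) := by
        refine mul_le_mul (hq j) (h2.trans (le_of_eq h3))
          (Real.rpow_nonneg (tj_nonneg hM0 _) _) (by positivity)
      refine h4.trans (le_of_eq ?_)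
      ring
    have hsum2 : ∑ j ∈ Finset.Icc 1 N,
        ((Et y (tj M j)).card : ℝ) * (2 ^ N : ℝ)⁻¹ * tj M (j+1) ^ p
          ≤ (18 * M) ^ p * (1/4) * Dp p := by
      calc ∑ j ∈ Finset.Icc 1 N,
            ((Et y (tj M j)).card : ℝ) * (2 ^ N : ℝ)⁻¹ * tj M (j+1) ^ p
          ≤ ∑ j ∈ Finset.Icc 1 N, (18 * M) ^ p * (1/4)
              * (((2:ℝ) ^ j) ^ p * ((2:ℝ) ^ (2 ^ j))⁻¹) :=
            Finset.sum_le_sum hterm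
        _ = (18 * M) ^ p * (1/4) * ∑ j ∈ Finset.Icc 1 N,
              (((2:ℝ) ^ j) ^ p * ((2:ℝ) ^ (2 ^ j))⁻¹) := by
            rw [Finset.mul_sum]
        _ ≤ (18 * M) ^ p * (1/4) * Dp p := by
            refine mul_le_mul_of_nonneg_left (gsum p hp N) ?_
            have : (0:ℝ) ≤ (18 * M) ^ p := Real.rpow_nonneg (by positivity) _
            positivity
    have ht1 : tj M 1 ^ p ≤ (18 * M) ^ p := by
      refine Real.rpow_le_rpow (tj_nonneg hM0 1) ?_ hp0
      unfold tj
      nlinarith [hM0]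
    have hDp := Dp_nonneg hp
    have h18 : (0:ℝ) ≤ (18 * M) ^ p := Real.rpow_nonneg (by positivity) _
    have hfinal : (2 ^ N : ℝ)⁻¹ * ∑ ε : Fin N → Bool, ‖S y ε‖ ^ p
        ≤ (18 * M) ^ p * (1 + Dp p) := by
      have := havg.trans (add_le_add ht1 hsum2)
      nlinarith [this]
    refine hfinal.trans ?_
    have hKM : Kp p * M = (18 * M) * (1 + Dp p) := by unfold Kp; ring
    rw [hKM]
    conv_rhs => rw [Real.mul_rpow (show (0:ℝ) ≤ 18 * M by positivity)
      (show (0:ℝ) ≤ 1 + Dp p by linarith)]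
    refine mul_le_mul_of_nonneg_left ?_ h18
    calc (1 + Dp p) = (1 + Dp p) ^ (1:ℝ) := (Real.rpow_one _).symm
      _ ≤ (1 + Dp p) ^ p := Real.rpow_le_rpow_of_exponent_le (by linarith) hp

end KahaneMain

section Measure
open MeasureTheory
variable {X : Type u} [NormedAddCommGroup X] [NormedSpace ℂ X]

lemma mon_abs (n : ℕ) (z : ℕ → Circle) : ‖mon n z‖ = 1 := by
  unfold mon
  rw [norm_prod]
  refine Finset.prod_eq_one fun i _ => ?_
  rw [norm_pow, Circle.norm_coe]
  norm_num

lemma mon_continuous (n : ℕ) : Continuous (mon n) := by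
  unfold mon
  refine continuous_finset_prod _ fun i _ => ?_
  exact ((continuous_subtype_val.comp (continuous_apply i))).pow _

lemma sumfun_continuous {N : ℕ} (x : Fin N → X) :
    Continuous (fun z : ℕ → Circle => ∑ n : Fin N, mon ((n : ℕ) + 1) z • x n) := by
  refine continuous_finset_sum _ fun n _ => ?_
  exact (mon_continuous _).smul continuous_const

lemma memLp_of_continuous (q : ENNReal) {f : (ℕ → Circle) → X} (hf : Continuous f) :
    MemLp f q muTN := by
  obtain ⟨C, hC⟩ := IsCompact.exists_bound_of_continuousOn isCompact_univ
    hf.continuousOn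
  exact MemLp.of_bound hf.aestronglyMeasurable C
    (Filter.Eventually.of_forall fun z => hC z (Set.mem_univ z))

lemma integrable_norm_rpow_of_continuous {f : (ℕ → Circle) → X} (hf : Continuous f)
    (q : ℝ) (hq : 0 ≤ q) : Integrable (fun z => ‖f z‖ ^ q) muTN := by
  have hcont : Continuous (fun z => ‖f z‖ ^ q) := by
    refine Continuous.rpow_const hf.norm fun z => Or.inr hq
  obtain ⟨C, hC⟩ := IsCompact.exists_bound_of_continuousOn isCompact_univ
    hcont.continuousOn
  refine ⟨hcont.aestronglyMeasurable, ?_⟩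
  refine HasFiniteIntegral.of_bounded (C := C) ?_
  exact Filter.Eventually.of_forall fun z => by
    simpa [Real.norm_eq_abs] using hC z (Set.mem_univ z)

lemma int_cmul (r : ℝ) (f : (ℕ → Circle) → ℝ) (hf : Integrable f muTN) :
    ∫ z, r * f z ∂muTN = r * ∫ z, f z ∂muTN := by
  simpa [smul_eq_mul] using integral_smul (μ := muTN) r f

lemma jensen_int (p : ℝ) (hp : 1 ≤ p) {f : (ℕ → Circle) → X} (hf : Continuous f) :
    ∫ z, ‖f z‖ ∂muTN ≤ (∫ z, ‖f z‖ ^ p ∂muTN) ^ (1 / p) := by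
  have hp0 : (0:ℝ) ≤ p := by linarith
  have hpne : p ≠ 0 := by linarith
  have hint : Integrable f muTN := memLp_one_iff_integrable.mp
    (memLp_of_continuous 1 hf)
  have h1 : eLpNorm f 1 muTN ≤ eLpNorm f (ENNReal.ofReal p) muTN :=
    eLpNorm_le_eLpNorm_of_exponent_le
      (by simpa using ENNReal.one_le_ofReal.mpr hp) hf.aestronglyMeasurable
  have h2 : eLpNorm f 1 muTN = ENNReal.ofReal (∫ z, ‖f z‖ ∂muTN) := by
    rw [eLpNorm_one_eq_lintegral_enorm, ← ofReal_integral_norm_eq_lintegral_enorm hint]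
  have h3 : eLpNorm f (ENNReal.ofReal p) muTN
      = ENNReal.ofReal ((∫ z, ‖f z‖ ^ p ∂muTN) ^ (1 / p)) := by
    rw [MemLp.eLpNorm_eq_integral_rpow_norm
      (by simp only [ne_eq, ENNReal.ofReal_eq_zero, not_le]; linarith)
      (by simp) (memLp_of_continuous _ hf)]
    rw [ENNReal.toReal_ofReal hp0, one_div]
  rw [h2, h3] at h1
  rwa [ENNReal.ofReal_le_ofReal_iff
    (Real.rpow_nonneg (integral_nonneg fun z => Real.rpow_nonneg (norm_nonneg _) p) _)] at h1

end Measure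

end Stmt4Aux


open Stmt4Aux MeasureTheory in
/-- **Proposition.** For every `1 ≤ p < ∞` there is a constant `C_p ≥ 1`, depending only on `p`,
such that for every complex Banach space `X` and all `x_1, …, x_N ∈ X`, the `H_p^{rad}`-norm
`E_ε ‖∑ ε_n x_n n^{-s}‖_{H_p(X)}` is equivalent to the `Rad(X)`-norm `E_ε ‖∑ ε_n x_n‖`. -/
theorem stmt4 (p : ℝ) (hp : 1 ≤ p) :
    ∃ C : ℝ, 1 ≤ C ∧ ∀ (X : Type u) (_ : NormedAddCommGroup X) (_ : NormedSpace ℂ X)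
      (_ : CompleteSpace X) (N : ℕ) (x : Fin N → X),
      (1 / C) * Eavg N (fun ε => Hnorm p N (fun n => sgn ε n • x n)) ≤
          Eavg N (fun ε => ‖∑ n : Fin N, sgn ε n • x n‖) ∧
        Eavg N (fun ε => ‖∑ n : Fin N, sgn ε n • x n‖) ≤
          C * Eavg N (fun ε => Hnorm p N (fun n => sgn ε n • x n)) := by
  classical
  have hp0 : (0:ℝ) ≤ p := by linarith
  have hpne : p ≠ 0 := by linarith
  have hKp1 := Kp_ge_one hp
  refine ⟨2 * Kp p, by linarith, ?_⟩
  intro X inst1 inst2 inst3 N x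
  have hpow : (0:ℝ) < 2 ^ N := by positivity
  -- notation
  set F : (Fin N → Bool) → (ℕ → Circle) → X :=
    fun ε z => ∑ n : Fin N, mon ((n : ℕ) + 1) z • (sgn ε n • x n) with hF
  set R : ℝ := Eavg N (fun ε => ‖∑ n : Fin N, sgn ε n • x n‖) with hRdef
  have hR0 : 0 ≤ R := by
    rw [hRdef]
    unfold Eavg
    exact mul_nonneg (by positivity) (Finset.sum_nonneg fun ε _ => norm_nonneg _)
  have hFc : ∀ ε, Continuous (F ε) := fun ε =>
    sumfun_continuous (fun n => sgn ε n • x n)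
  have hHdef : ∀ ε : Fin N → Bool, Hnorm p N (fun n => sgn ε n • x n)
      = (∫ z, ‖F ε z‖ ^ p ∂muTN) ^ (1/p) := fun ε => rfl
  have hip : ∀ ε : Fin N → Bool, Integrable (fun z => ‖F ε z‖ ^ p) muTN :=
    fun ε => integrable_norm_rpow_of_continuous (hFc ε) p hp0
  have hi1 : ∀ ε : Fin N → Bool, Integrable (fun z => ‖F ε z‖) muTN :=
    fun ε => (memLp_one_iff_integrable.mp (memLp_of_continuous 1 (hFc ε))).norm
  have hH0 : ∀ ε : Fin N → Bool, 0 ≤ Hnorm p N (fun n => sgn ε n • x n) := by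
    intro ε
    rw [hHdef ε]
    exact Real.rpow_nonneg
      (integral_nonneg fun z => Real.rpow_nonneg (norm_nonneg _) p) _
  have hHpow : ∀ ε : Fin N → Bool, (Hnorm p N (fun n => sgn ε n • x n)) ^ p
      = ∫ z, ‖F ε z‖ ^ p ∂muTN := by
    intro ε
    rw [hHdef ε, ← Real.rpow_mul
      (integral_nonneg fun z => Real.rpow_nonneg (norm_nonneg _) p),
      one_div, inv_mul_cancel₀ hpne, Real.rpow_one]
  -- identification with S
  have hSid : ∀ (ε : Fin N → Bool) (z : ℕ → Circle),
      F ε z = S (fun n => mon ((n : ℕ) + 1) z • x n) ε := by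
    intro ε z
    rw [hF]
    unfold S
    exact Finset.sum_congr rfl fun n _ => smul_comm _ _ _
  have hmon_ne : ∀ (n : Fin N) (z : ℕ → Circle), mon ((n : ℕ) + 1) z ≠ 0 := by
    intro n z h
    have := mon_abs ((n : ℕ) + 1) z
    rw [h] at this
    simp at this
  -- contraction (i): ∑ ‖S y(z)‖ ≤ 2 ∑ ‖S x‖
  have hcontr1 : ∀ z : ℕ → Circle,
      ∑ ε : Fin N → Bool, ‖S (fun n => mon ((n : ℕ) + 1) z • x n) ε‖
        ≤ 2 * ∑ ε : Fin N → Bool, ‖∑ n : Fin N, sgn ε n • x n‖ := by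
    intro z
    have := contraction_complex x (fun n => mon ((n : ℕ) + 1) z)
      (fun n => le_of_eq (mon_abs _ z))
    exact this
  -- contraction (ii)
  have hcontr2 : ∀ z : ℕ → Circle,
      ∑ ε : Fin N → Bool, ‖∑ n : Fin N, sgn ε n • x n‖
        ≤ 2 * ∑ ε : Fin N → Bool, ‖S (fun n => mon ((n : ℕ) + 1) z • x n) ε‖ := by
    intro z
    have h := contraction_complex (fun n => mon ((n : ℕ) + 1) z • x n)
      (fun n => (mon ((n : ℕ) + 1) z)⁻¹)
      (fun n => by
        rw [norm_inv, mon_abs]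
        norm_num)
    have heq : ∀ ε : Fin N → Bool,
        (∑ n : Fin N, sgn ε n • ((mon ((n : ℕ) + 1) z)⁻¹ • (mon ((n : ℕ) + 1) z • x n)))
          = ∑ n : Fin N, sgn ε n • x n := by
      intro ε
      refine Finset.sum_congr rfl fun n _ => ?_
      rw [smul_smul, smul_smul, mul_assoc, inv_mul_cancel₀ (hmon_ne n z), mul_one]
    calc ∑ ε : Fin N → Bool, ‖∑ n : Fin N, sgn ε n • x n‖
        = ∑ ε : Fin N → Bool, ‖∑ n : Fin N,
            sgn ε n • ((mon ((n : ℕ) + 1) z)⁻¹ • (mon ((n : ℕ) + 1) z • x n))‖ := by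
          exact Finset.sum_congr rfl fun ε _ => by rw [heq ε]
      _ ≤ 2 * ∑ ε : Fin N → Bool, ‖∑ n : Fin N,
            sgn ε n • (mon ((n : ℕ) + 1) z • x n)‖ := h
      _ = 2 * ∑ ε : Fin N → Bool, ‖S (fun n => mon ((n : ℕ) + 1) z • x n) ε‖ := rfl
  ----------------------------------------------------------------
  -- Direction 2 : R ≤ 2 * Eavg Hnorm
  ----------------------------------------------------------------
  have hdir2 : R ≤ 2 * Eavg N (fun ε => Hnorm p N (fun n => sgn ε n • x n)) := by
    have hz : ∀ z : ℕ → Circle, R ≤ 2 * ((2 ^ N : ℝ)⁻¹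
        * ∑ ε : Fin N → Bool, ‖F ε z‖) := by
      intro z
      have h1 := hcontr2 z
      have h2 : ∑ ε : Fin N → Bool, ‖S (fun n => mon ((n : ℕ) + 1) z • x n) ε‖
          = ∑ ε : Fin N → Bool, ‖F ε z‖ :=
        Finset.sum_congr rfl fun ε _ => by rw [hSid ε z]
      rw [h2] at h1
      rw [hRdef]
      unfold Eavg
      have := mul_le_mul_of_nonneg_left h1 (le_of_lt (inv_pos.mpr hpow))
      calc (2 ^ N : ℝ)⁻¹ * ∑ ε : Fin N → Bool, ‖∑ n : Fin N, sgn ε n • x n‖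
          ≤ (2 ^ N : ℝ)⁻¹ * (2 * ∑ ε : Fin N → Bool, ‖F ε z‖) := this
        _ = 2 * ((2 ^ N : ℝ)⁻¹ * ∑ ε : Fin N → Bool, ‖F ε z‖) := by ring
    have hInt : Integrable (fun z => 2 * ((2 ^ N : ℝ)⁻¹
        * ∑ ε : Fin N → Bool, ‖F ε z‖)) muTN := by
      exact (((integrable_finset_sum _ (fun ε _ => hi1 ε)).const_mul _).const_mul _)
    calc R = ∫ _z : ℕ → Circle, R ∂muTN := by
          rw [integral_const]
          simp [measure_univ]
      _ ≤ ∫ z, 2 * ((2 ^ N : ℝ)⁻¹ * ∑ ε : Fin N → Bool, ‖F ε z‖) ∂muTN :=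
          integral_mono (integrable_const R) hInt hz
      _ = 2 * ((2 ^ N : ℝ)⁻¹ * ∑ ε : Fin N → Bool, ∫ z, ‖F ε z‖ ∂muTN) := by
          rw [int_cmul _ _ (((integrable_finset_sum _ (fun ε _ => hi1 ε)).const_mul _)),
            int_cmul _ _ (integrable_finset_sum _ (fun ε _ => hi1 ε)),
            integral_finset_sum _ (fun ε _ => hi1 ε)]
      _ ≤ 2 * ((2 ^ N : ℝ)⁻¹ * ∑ ε : Fin N → Bool,
            Hnorm p N (fun n => sgn ε n • x n)) := by
          have hsum : ∑ ε : Fin N → Bool, ∫ z, ‖F ε z‖ ∂muTN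
              ≤ ∑ ε : Fin N → Bool, Hnorm p N (fun n => sgn ε n • x n) := by
            refine Finset.sum_le_sum fun ε _ => ?_
            rw [hHdef ε]
            exact jensen_int p hp (hFc ε)
          have := mul_le_mul_of_nonneg_left hsum (le_of_lt (inv_pos.mpr hpow))
          linarith
      _ = 2 * Eavg N (fun ε => Hnorm p N (fun n => sgn ε n • x n)) := rfl
  ----------------------------------------------------------------
  -- Direction 1 : Eavg Hnorm ≤ 2 * Kp p * R
  ----------------------------------------------------------------
  have hH_avg0 : 0 ≤ Eavg N (fun ε => Hnorm p N (fun n => sgn ε n • x n)) := by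
    unfold Eavg
    exact mul_nonneg (by positivity) (Finset.sum_nonneg fun ε _ => hH0 ε)
  have hdir1 : Eavg N (fun ε => Hnorm p N (fun n => sgn ε n • x n))
      ≤ 2 * Kp p * R := by
    -- step 1 : finite Jensen
    have hw : ∑ _ε : Fin N → Bool, (2 ^ N : ℝ)⁻¹ = 1 := by
      rw [Finset.sum_const, Finset.card_univ, nsmul_eq_mul]
      simp
    have hjen := Real.rpow_arith_mean_le_arith_mean_rpow Finset.univ
      (fun _ => (2 ^ N : ℝ)⁻¹)
      (fun ε => Hnorm p N (fun n => sgn ε n • x n))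
      (fun ε _ => by positivity) hw (fun ε _ => hH0 ε) hp
    have hstep1 : Eavg N (fun ε => Hnorm p N (fun n => sgn ε n • x n))
        ≤ ((2 ^ N : ℝ)⁻¹ * ∑ ε : Fin N → Bool,
            (Hnorm p N (fun n => sgn ε n • x n)) ^ p) ^ (1/p) := by
      have e1 : Eavg N (fun ε => Hnorm p N (fun n => sgn ε n • x n))
          = ∑ ε : Fin N → Bool, (2 ^ N : ℝ)⁻¹
              * Hnorm p N (fun n => sgn ε n • x n) := by
        unfold Eavg
        rw [Finset.mul_sum]
      have e2 : ((2 ^ N : ℝ)⁻¹ * ∑ ε : Fin N → Bool,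
            (Hnorm p N (fun n => sgn ε n • x n)) ^ p)
          = ∑ ε : Fin N → Bool, (2 ^ N : ℝ)⁻¹
              * (Hnorm p N (fun n => sgn ε n • x n)) ^ p := by
        rw [Finset.mul_sum]
      calc Eavg N (fun ε => Hnorm p N (fun n => sgn ε n • x n))
          = ((Eavg N (fun ε => Hnorm p N (fun n => sgn ε n • x n))) ^ p) ^ (1/p) := by
            rw [← Real.rpow_mul hH_avg0, one_div, mul_inv_cancel₀ hpne, Real.rpow_one]
        _ ≤ ((2 ^ N : ℝ)⁻¹ * ∑ ε : Fin N → Bool,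
              (Hnorm p N (fun n => sgn ε n • x n)) ^ p) ^ (1/p) := by
            refine Real.rpow_le_rpow (Real.rpow_nonneg hH_avg0 _) ?_ (by positivity)
            rw [e1, e2]
            exact hjen
    -- step 2 : swap
    have hstep2 : (2 ^ N : ℝ)⁻¹ * ∑ ε : Fin N → Bool,
          (Hnorm p N (fun n => sgn ε n • x n)) ^ p
        = ∫ z, (2 ^ N : ℝ)⁻¹ * ∑ ε : Fin N → Bool, ‖F ε z‖ ^ p ∂muTN := by
      rw [show (∑ ε : Fin N → Bool, (Hnorm p N (fun n => sgn ε n • x n)) ^ p)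
          = ∑ ε : Fin N → Bool, ∫ z, ‖F ε z‖ ^ p ∂muTN from
        Finset.sum_congr rfl fun ε _ => hHpow ε]
      rw [← integral_finset_sum _ (fun ε _ => hip ε),
        ← int_cmul _ _ (integrable_finset_sum _ (fun ε _ => hip ε))]
    -- step 3 : Kahane pointwise
    have hstep3 : ∀ z : ℕ → Circle, (2 ^ N : ℝ)⁻¹
        * ∑ ε : Fin N → Bool, ‖F ε z‖ ^ p ≤ (2 * Kp p * R) ^ p := by
      intro z
      have hk := kahane_moment (fun n => mon ((n : ℕ) + 1) z • x n) p hp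
      have hls : ∑ ε : Fin N → Bool, ‖F ε z‖ ^ p
          = ∑ ε : Fin N → Bool, ‖S (fun n => mon ((n : ℕ) + 1) z • x n) ε‖ ^ p :=
        Finset.sum_congr rfl fun ε _ => by rw [hSid ε z]
      rw [hls]
      refine hk.trans ?_
      have havg : (2 ^ N : ℝ)⁻¹ * ∑ ε : Fin N → Bool,
          ‖S (fun n => mon ((n : ℕ) + 1) z • x n) ε‖ ≤ 2 * R := by
        have h1 := hcontr1 z
        have := mul_le_mul_of_nonneg_left h1 (le_of_lt (inv_pos.mpr hpow))
        rw [hRdef]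
        unfold Eavg
        calc (2 ^ N : ℝ)⁻¹ * ∑ ε : Fin N → Bool,
              ‖S (fun n => mon ((n : ℕ) + 1) z • x n) ε‖
            ≤ (2 ^ N : ℝ)⁻¹ * (2 * ∑ ε : Fin N → Bool,
                ‖∑ n : Fin N, sgn ε n • x n‖) := this
          _ = 2 * ((2 ^ N : ℝ)⁻¹ * ∑ ε : Fin N → Bool,
                ‖∑ n : Fin N, sgn ε n • x n‖) := by ring
      have hbase0 : (0:ℝ) ≤ Kp p * ((2 ^ N : ℝ)⁻¹ * ∑ ε : Fin N → Bool,
          ‖S (fun n => mon ((n : ℕ) + 1) z • x n) ε‖) := by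
        refine mul_nonneg (by linarith) ?_
        exact mul_nonneg (by positivity) (Finset.sum_nonneg fun ε _ => norm_nonneg _)
      refine Real.rpow_le_rpow hbase0 ?_ hp0
      calc Kp p * ((2 ^ N : ℝ)⁻¹ * ∑ ε : Fin N → Bool,
            ‖S (fun n => mon ((n : ℕ) + 1) z • x n) ε‖)
          ≤ Kp p * (2 * R) := mul_le_mul_of_nonneg_left havg (by linarith)
        _ = 2 * Kp p * R := by ring
    -- step 4 : integrate the constant bound
    have hstep4 : ∫ z, (2 ^ N : ℝ)⁻¹ * ∑ ε : Fin N → Bool, ‖F ε z‖ ^ p ∂muTN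
        ≤ (2 * Kp p * R) ^ p := by
      have hle : (fun z => (2 ^ N : ℝ)⁻¹ * ∑ ε : Fin N → Bool, ‖F ε z‖ ^ p)
          ≤ fun _ => (2 * Kp p * R) ^ p := hstep3
      calc ∫ z, (2 ^ N : ℝ)⁻¹ * ∑ ε : Fin N → Bool, ‖F ε z‖ ^ p ∂muTN
          ≤ ∫ _z : ℕ → Circle, (2 * Kp p * R) ^ p ∂muTN := by
            refine integral_mono ?_ (integrable_const _) hstep3
            exact (integrable_finset_sum _ (fun ε _ => hip ε)).const_mul _
        _ = (2 * Kp p * R) ^ p := by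
            rw [integral_const]
            simp [measure_univ]
    -- combine
    have hKR0 : (0:ℝ) ≤ 2 * Kp p * R :=
      mul_nonneg (mul_nonneg (by norm_num) (by linarith)) hR0
    have h5 : ((2 ^ N : ℝ)⁻¹ * ∑ ε : Fin N → Bool,
          (Hnorm p N (fun n => sgn ε n • x n)) ^ p) ^ (1/p)
        ≤ (((2 * Kp p * R) ^ p)) ^ (1/p) := by
      refine Real.rpow_le_rpow ?_ ?_ (by positivity)
      · exact mul_nonneg (by positivity)
          (Finset.sum_nonneg fun ε _ => Real.rpow_nonneg (hH0 ε) p)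
      · rw [hstep2]; exact hstep4
    have hcollapse : (((2 * Kp p * R) ^ p) ^ (1/p)) = 2 * Kp p * R := by
      rw [← Real.rpow_mul hKR0, mul_one_div, div_self hpne, Real.rpow_one]
    exact hstep1.trans (h5.trans_eq hcollapse)
  ----------------------------------------------------------------
  -- conclusion
  ----------------------------------------------------------------
  constructor
  · rw [div_mul_eq_mul_div, div_le_iff₀ (by linarith : (0:ℝ) < 2 * Kp p)]
    calc 1 * Eavg N (fun ε => Hnorm p N (fun n => sgn ε n • x n))
        = Eavg N (fun ε => Hnorm p N (fun n => sgn ε n • x n)) := one_mul _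
      _ ≤ 2 * Kp p * R := hdir1
      _ = R * (2 * Kp p) := by ring
  · calc R ≤ 2 * Eavg N (fun ε => Hnorm p N (fun n => sgn ε n • x n)) := hdir2
      _ ≤ 2 * Kp p * Eavg N (fun ε => Hnorm p N (fun n => sgn ε n • x n)) := by
          nlinarith [hH_avg0, hKp1]
end
end

section
/- Let 1 ≤ p < ∞, let X be a complex Banach space and let (x_n)_{n∈ℕ} ⊂ X. If there is C ≥ 1 such that E_ε ‖∑_{n=1}^N ε_n a_n x_n‖_X ≤ C ‖∑_{n=1}^N a_n x_n‖_X for all N and all scalars a_1,…,a_N ∈ ℂ, then there is C' ≥ 1 (depending only on C and p) such that E_ε ‖∑_{n=1}^N ε_n a_n x_n n^{-s}‖_{H_p(X)} ≤ C' ‖∑_{n=1}^N a_n x_n n^{-s}‖_{H_p(X)} for all N and all scalars a_1,…,a_N ∈ ℂ. -/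
open MeasureTheory TopologicalSpace

noncomputable section

universe u

namespace KahaneAux
open Finset

variable {X : Type*} [NormedAddCommGroup X] [NormedSpace ℂ X] {N : ℕ}

def Sf (y : Fin N → X) (ε : Fin N → Bool) : X := ∑ n, sgn ε n • y n

def Pf (y : Fin N → X) (k : ℕ) (ε : Fin N → Bool) : X :=
  ∑ n ∈ univ.filter (fun n : Fin N => (n : ℕ) < k), sgn ε n • y n

def Tf (y : Fin N → X) (k : ℕ) (ε : Fin N → Bool) : X :=
  ∑ n ∈ univ.filter (fun n : Fin N => ¬ (n : ℕ) < k), sgn ε n • y n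

lemma norm_sgn (ε : Fin N → Bool) (n : Fin N) : ‖sgn ε n‖ = 1 := by
  unfold sgn; split <;> simp

lemma Pf_add_Tf (y : Fin N → X) (k : ℕ) (ε : Fin N → Bool) :
    Pf y k ε + Tf y k ε = Sf y ε :=
  Finset.sum_filter_add_sum_filter_not univ _ _

def rf (k : ℕ) (ε : Fin N → Bool) : Fin N → Bool := fun n => if (n : ℕ) < k then ε n else !(ε n)

lemma rf_rf (k : ℕ) (ε : Fin N → Bool) : rf k (rf k ε) = ε := by
  funext n; unfold rf; by_cases h : (n : ℕ) < k <;> simp [h]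

lemma sgn_rf_lt {k : ℕ} {n : Fin N} (h : (n : ℕ) < k) (ε : Fin N → Bool) :
    sgn (rf k ε) n = sgn ε n := by simp [sgn, rf, h]

lemma sgn_rf_ge {k : ℕ} {n : Fin N} (h : ¬ (n : ℕ) < k) (ε : Fin N → Bool) :
    sgn (rf k ε) n = -sgn ε n := by
  simp only [sgn, rf, if_neg h]
  cases ε n <;> simp

lemma Pf_rf {j k : ℕ} (hjk : j ≤ k) (y : Fin N → X) (ε : Fin N → Bool) :
    Pf y j (rf k ε) = Pf y j ε := by
  refine Finset.sum_congr rfl fun n hn => ?_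
  rw [mem_filter] at hn
  rw [sgn_rf_lt (lt_of_lt_of_le hn.2 hjk)]

lemma Tf_rf (k : ℕ) (y : Fin N → X) (ε : Fin N → Bool) :
    Tf y k (rf k ε) = -Tf y k ε := by
  rw [Tf, Tf, ← Finset.sum_neg_distrib]
  refine Finset.sum_congr rfl fun n hn => ?_
  rw [mem_filter] at hn
  rw [sgn_rf_ge hn.2, neg_smul]

lemma Sf_rf (k : ℕ) (y : Fin N → X) (ε : Fin N → Bool) :
    Sf y (rf k ε) = Pf y k ε - Tf y k ε := by
  rw [← Pf_add_Tf y k (rf k ε), Pf_rf le_rfl, Tf_rf, sub_eq_add_neg]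


lemma card_le_two_mul_inter {α : Type*} [DecidableEq α] (A B : Finset α) (g : α → α)
    (hg : ∀ a, g (g a) = a) (hA : ∀ a ∈ A, g a ∈ A) (h : ∀ a ∈ A, a ∈ B ∨ g a ∈ B) :
    A.card ≤ 2 * (A ∩ B).card := by
  have hsub : A ⊆ (A ∩ B) ∪ (A ∩ B).image g := by
    intro a ha
    rcases h a ha with hb | hb
    · exact mem_union_left _ (mem_inter.2 ⟨ha, hb⟩)
    · exact mem_union_right _ (mem_image.2 ⟨g a, mem_inter.2 ⟨hA a ha, hb⟩, hg a⟩)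
  calc A.card ≤ ((A ∩ B) ∪ (A ∩ B).image g).card := card_le_card hsub
    _ ≤ (A ∩ B).card + ((A ∩ B).image g).card := card_union_le _ _
    _ ≤ (A ∩ B).card + (A ∩ B).card := by
        exact Nat.add_le_add_left (card_image_le) _
    _ = 2 * (A ∩ B).card := (two_mul _).symm

def mrg {N : ℕ} (k : ℕ) (ε δ : Fin N → Bool) : Fin N → Bool :=
  fun n => if (n : ℕ) < k then ε n else δ n

lemma indep_card {N : ℕ} (k : ℕ) (f g : (Fin N → Bool) → Prop) [DecidablePred f]
    [DecidablePred g]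
    (hf : ∀ ε δ : Fin N → Bool, (∀ n : Fin N, (n : ℕ) < k → ε n = δ n) → (f ε ↔ f δ))
    (hg : ∀ ε δ : Fin N → Bool, (∀ n : Fin N, ¬ (n : ℕ) < k → ε n = δ n) → (g ε ↔ g δ)) :
    (univ.filter (fun ε => f ε ∧ g ε)).card * 2 ^ N
      = (univ.filter f).card * (univ.filter g).card := by
  have hcard : Fintype.card (Fin N → Bool) = 2 ^ N := by
    simp [Fintype.card_fun]
  have key : ((univ.filter (fun ε => f ε ∧ g ε)) ×ˢ (univ : Finset (Fin N → Bool))).card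
      = ((univ.filter f) ×ˢ (univ.filter g)).card := by
    refine card_bij' (fun p _ => (mrg k p.1 p.2, mrg k p.2 p.1))
      (fun p _ => (mrg k p.1 p.2, mrg k p.2 p.1)) ?_ ?_ ?_ ?_
    · rintro ⟨ω, γ⟩ hp
      simp only [mem_product, mem_filter, mem_univ, true_and] at hp ⊢
      refine ⟨(hf ω (mrg k ω γ) (fun n hn => by simp [mrg, hn])).1 hp.1.1,
        (hg ω (mrg k γ ω) (fun n hn => by simp [mrg, hn])).1 hp.1.2⟩
    · rintro ⟨ε, δ⟩ hp
      simp only [mem_product, mem_filter, mem_univ, true_and, and_true] at hp ⊢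
      exact ⟨(hf ε (mrg k ε δ) (fun n hn => by simp [mrg, hn])).1 hp.1,
        (hg δ (mrg k ε δ) (fun n hn => by simp [mrg, hn])).1 hp.2⟩
    · rintro ⟨ω, γ⟩ _
      ext n <;> simp only [mrg] <;> by_cases h : (n : ℕ) < k <;> simp [h]
    · rintro ⟨ε, δ⟩ _
      ext n <;> simp only [mrg] <;> by_cases h : (n : ℕ) < k <;> simp [h]
  rw [card_product, card_product, card_univ, hcard] at key
  exact key


open scoped Classical

noncomputable def Aset (y : Fin N → X) (t : ℝ) (k : ℕ) : Finset (Fin N → Bool) :=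
  univ.filter (fun ε => t < ‖Pf y k ε‖ ∧ ∀ j < k, ‖Pf y j ε‖ ≤ t)
noncomputable def Bset (y : Fin N → X) (t : ℝ) : Finset (Fin N → Bool) :=
  univ.filter (fun ε => t < ‖Sf y ε‖)
noncomputable def Cset (y : Fin N → X) (t : ℝ) (k : ℕ) : Finset (Fin N → Bool) :=
  univ.filter (fun ε => t < ‖Tf y k ε‖)

lemma two_norm {v : X} : ‖v + v‖ = 2 * ‖v‖ := by
  rw [← two_smul ℝ v, norm_smul]; simp

lemma levy_A (y : Fin N → X) (t : ℝ) (k : ℕ) :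
    (Aset y t k).card ≤ 2 * (Aset y t k ∩ Bset y t).card := by
  refine card_le_two_mul_inter _ _ (rf k) (rf_rf k) ?_ ?_
  · intro ε hε
    simp only [Aset, mem_filter, mem_univ, true_and] at hε ⊢
    refine ⟨by rw [Pf_rf le_rfl]; exact hε.1, fun j hj => ?_⟩
    rw [Pf_rf hj.le]; exact hε.2 j hj
  · intro ε hε
    simp only [Aset, Bset, mem_filter, mem_univ, true_and] at hε ⊢
    by_contra hcon
    push_neg at hcon
    have hsum : Sf y ε + Sf y (rf k ε) = Pf y k ε + Pf y k ε := by
      rw [Sf_rf, ← Pf_add_Tf y k ε]; abel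
    have h1 : ‖Sf y ε + Sf y (rf k ε)‖ ≤ 2 * t := by
      calc ‖Sf y ε + Sf y (rf k ε)‖ ≤ ‖Sf y ε‖ + ‖Sf y (rf k ε)‖ := norm_add_le _ _
        _ ≤ t + t := add_le_add hcon.1 hcon.2
        _ = 2 * t := by ring
    rw [hsum, two_norm] at h1
    have := hε.1
    linarith

lemma levy_C (y : Fin N → X) (t : ℝ) (k : ℕ) :
    (Cset y t k).card ≤ 2 * (Bset y t).card := by
  have h1 : (Cset y t k).card ≤ 2 * (Cset y t k ∩ Bset y t).card := by
    refine card_le_two_mul_inter _ _ (rf k) (rf_rf k) ?_ ?_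
    · intro ε hε
      simp only [Cset, mem_filter, mem_univ, true_and] at hε ⊢
      rw [Tf_rf, norm_neg]; exact hε
    · intro ε hε
      simp only [Cset, Bset, mem_filter, mem_univ, true_and] at hε ⊢
      by_contra hcon
      push_neg at hcon
      have hsum : Sf y ε - Sf y (rf k ε) = Tf y k ε + Tf y k ε := by
        rw [Sf_rf, ← Pf_add_Tf y k ε]; abel
      have h1 : ‖Sf y ε - Sf y (rf k ε)‖ ≤ 2 * t := by
        calc ‖Sf y ε - Sf y (rf k ε)‖ ≤ ‖Sf y ε‖ + ‖Sf y (rf k ε)‖ := norm_sub_le _ _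
          _ ≤ t + t := add_le_add hcon.1 hcon.2
          _ = 2 * t := by ring
      rw [hsum, two_norm] at h1
      linarith
  exact h1.trans (Nat.mul_le_mul_left 2 (card_le_card inter_subset_right))

lemma Aset_disj (y : Fin N → X) (t : ℝ) :
    ∀ k ∈ Finset.Icc 1 N, ∀ l ∈ Finset.Icc 1 N, k ≠ l →
      Disjoint (Aset y t k) (Aset y t l) := by
  have key : ∀ k l : ℕ, k < l → Disjoint (Aset y t k) (Aset y t l) := by
    intro k l hkl
    rw [Finset.disjoint_left]
    intro ε hk hl
    simp only [Aset, mem_filter, mem_univ, true_and] at hk hl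
    exact absurd hk.1 (not_lt.2 (hl.2 k hkl))
  intro k _ l _ hne
  rcases lt_or_gt_of_ne hne with h | h
  · exact key k l h
  · exact (key l k h).symm

lemma sum_A_le (y : Fin N → X) (t : ℝ) :
    ∑ k ∈ Finset.Icc 1 N, (Aset y t k).card ≤ 2 * (Bset y t).card := by
  calc ∑ k ∈ Finset.Icc 1 N, (Aset y t k).card
      ≤ ∑ k ∈ Finset.Icc 1 N, 2 * (Aset y t k ∩ Bset y t).card :=
        Finset.sum_le_sum fun k _ => levy_A y t k
    _ = 2 * ∑ k ∈ Finset.Icc 1 N, (Aset y t k ∩ Bset y t).card := by rw [Finset.mul_sum]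
    _ ≤ 2 * (Bset y t).card := by
        refine Nat.mul_le_mul_left 2 ?_
        rw [← Finset.card_biUnion]
        · exact card_le_card (Finset.biUnion_subset.2 fun k _ => inter_subset_right)
        · intro k hk l hl hne
          exact (Aset_disj y t k hk l hl hne).mono inter_subset_left inter_subset_left

lemma Pf_zero (y : Fin N → X) (ε : Fin N → Bool) : Pf y 0 ε = 0 := by
  rw [Pf]
  convert Finset.sum_empty
  simp [Finset.filter_eq_empty_iff]

lemma Pf_succ (y : Fin N → X) (k : ℕ) (hk : k < N) (ε : Fin N → Bool) :
    Pf y (k + 1) ε = Pf y k ε + sgn ε ⟨k, hk⟩ • y ⟨k, hk⟩ := by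
  rw [Pf, Pf]
  have : univ.filter (fun n : Fin N => (n : ℕ) < k + 1)
      = insert ⟨k, hk⟩ (univ.filter (fun n : Fin N => (n : ℕ) < k)) := by
    ext n
    simp only [mem_filter, mem_univ, true_and, mem_insert]
    constructor
    · intro h
      rcases Nat.lt_succ_iff_lt_or_eq.1 h with h' | h'
      · exact Or.inr h'
      · exact Or.inl (Fin.ext h')
    · rintro (rfl | h)
      · exact Nat.lt_succ_self k
      · exact h.trans (Nat.lt_succ_self k)
  rw [this, Finset.sum_insert (by simp)]

  abel

lemma Pf_N (y : Fin N → X) (ε : Fin N → Bool) : Pf y N ε = Sf y ε := by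
  rw [Pf, Sf]
  congr 1
  simp [Finset.filter_true_of_mem]

lemma cover (y : Fin N → X) {t b : ℝ} (ht : 0 ≤ t) (hb0 : 0 ≤ b)
    (hb : ∀ n, ‖y n‖ ≤ b) :
    Bset y (2 * t + b) ⊆ (Finset.Icc 1 N).biUnion
      (fun k => univ.filter (fun ε => ((t < ‖Pf y k ε‖ ∧ ∀ j < k, ‖Pf y j ε‖ ≤ t)
        ∧ t < ‖Tf y k ε‖))) := by
  intro ε hε
  simp only [Bset, mem_filter, mem_univ, true_and] at hε
  have hex : ∃ k, t < ‖Pf y k ε‖ := ⟨N, by rw [Pf_N]; linarith⟩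
  classical
  let k := Nat.find hex
  have hspec : t < ‖Pf y k ε‖ := Nat.find_spec hex
  have hmin : ∀ j < k, ‖Pf y j ε‖ ≤ t := fun j hj => not_lt.1 (Nat.find_min hex hj)
  have hk0 : 1 ≤ k := by
    rcases Nat.eq_zero_or_pos k with h | h
    · exfalso; rw [h, Pf_zero] at hspec; simp at hspec; linarith
    · exact h
  have hkN : k ≤ N := by
    by_contra hcon
    push_neg at hcon
    have := hmin N hcon
    rw [Pf_N] at this
    linarith
  simp only [Finset.mem_biUnion]
  refine ⟨k, Finset.mem_Icc.2 ⟨hk0, hkN⟩, ?_⟩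
  simp only [mem_filter, mem_univ, true_and]
  refine ⟨⟨hspec, hmin⟩, ?_⟩
  -- bound ‖Pf y k ε‖ ≤ t + b
  obtain ⟨j, hkj⟩ : ∃ j, k = j + 1 := ⟨k - 1, (Nat.succ_pred_eq_of_pos hk0).symm⟩
  have hjN : j < N := by omega
  rw [hkj]
  have hPk : ‖Pf y (j + 1) ε‖ ≤ t + b := by
    rw [Pf_succ y j hjN]
    calc ‖Pf y j ε + sgn ε ⟨j, hjN⟩ • y ⟨j, hjN⟩‖
        ≤ ‖Pf y j ε‖ + ‖sgn ε ⟨j, hjN⟩ • y ⟨j, hjN⟩‖ := norm_add_le _ _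
      _ ≤ t + b := by
          refine add_le_add (hmin j (by omega)) ?_
          rw [norm_smul, norm_sgn, one_mul]
          exact hb _
  have hsplit : ‖Sf y ε‖ ≤ ‖Pf y (j+1) ε‖ + ‖Tf y (j+1) ε‖ := by
    rw [← Pf_add_Tf y (j+1) ε]
    exact norm_add_le _ _
  linarith

lemma contraction (y : Fin N → X) {t b : ℝ} (ht : 0 ≤ t) (hb0 : 0 ≤ b)
    (hb : ∀ n, ‖y n‖ ≤ b) :
    (Bset y (2 * t + b)).card * 2 ^ N ≤ 4 * (Bset y t).card ^ 2 := by
  have h1 : (Bset y (2 * t + b)).card ≤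
      ∑ k ∈ Finset.Icc 1 N, (univ.filter (fun ε : Fin N → Bool =>
        ((t < ‖Pf y k ε‖ ∧ ∀ j < k, ‖Pf y j ε‖ ≤ t) ∧ t < ‖Tf y k ε‖))).card :=
    (card_le_card (cover y ht hb0 hb)).trans (Finset.card_biUnion_le)
  have h2 : ∀ k, (univ.filter (fun ε : Fin N → Bool =>
      ((t < ‖Pf y k ε‖ ∧ ∀ j < k, ‖Pf y j ε‖ ≤ t) ∧ t < ‖Tf y k ε‖))).card * 2 ^ N
      = (Aset y t k).card * (Cset y t k).card := by
    intro k
    rw [Aset, Cset]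
    refine indep_card k _ _ ?_ ?_
    · intro ε δ hagree
      have hP : ∀ j ≤ k, Pf y j ε = Pf y j δ := by
        intro j hj
        refine Finset.sum_congr rfl fun n hn => ?_
        rw [mem_filter] at hn
        rw [sgn, sgn, hagree n (lt_of_lt_of_le hn.2 hj)]
      rw [hP k le_rfl]
      constructor <;> (rintro ⟨h1', h2'⟩; refine ⟨h1', fun j hj => ?_⟩)
      · rw [← hP j hj.le]; exact h2' j hj
      · rw [hP j hj.le]; exact h2' j hj
    · intro ε δ hagree
      have hT : Tf y k ε = Tf y k δ := by
        refine Finset.sum_congr rfl fun n hn => ?_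
        rw [mem_filter] at hn
        rw [sgn, sgn, hagree n hn.2]
      rw [hT]
  calc (Bset y (2 * t + b)).card * 2 ^ N
      ≤ (∑ k ∈ Finset.Icc 1 N, (univ.filter (fun ε : Fin N → Bool =>
          ((t < ‖Pf y k ε‖ ∧ ∀ j < k, ‖Pf y j ε‖ ≤ t) ∧ t < ‖Tf y k ε‖))).card) * 2 ^ N :=
        Nat.mul_le_mul_right _ h1
    _ = ∑ k ∈ Finset.Icc 1 N, (Aset y t k).card * (Cset y t k).card := by
        rw [Finset.sum_mul]
        exact Finset.sum_congr rfl fun k _ => h2 k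
    _ ≤ ∑ k ∈ Finset.Icc 1 N, (Aset y t k).card * (2 * (Bset y t).card) :=
        Finset.sum_le_sum fun k _ => Nat.mul_le_mul_left _ (levy_C y t k)
    _ = (∑ k ∈ Finset.Icc 1 N, (Aset y t k).card) * (2 * (Bset y t).card) := by
        rw [Finset.sum_mul]
    _ ≤ (2 * (Bset y t).card) * (2 * (Bset y t).card) :=
        Nat.mul_le_mul_right _ (sum_A_le y t)
    _ = 4 * (Bset y t).card ^ 2 := by ring


-- coefficient bound
lemma coeff_le (y : Fin N → X) (n : Fin N) :
    ‖y n‖ ≤ (2 ^ N : ℝ)⁻¹ * ∑ ε : Fin N → Bool, ‖Sf y ε‖ := by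
  have key : ∀ ε : Fin N → Bool,
      2 * ‖y n‖ ≤ ‖Sf y ε‖ + ‖Sf y (Function.update ε n (!(ε n)))‖ := by
    intro ε
    set ε' := Function.update ε n (!(ε n)) with hε'
    have hdiff : Sf y ε - Sf y ε' = sgn ε n • y n - sgn ε' n • y n := by
      rw [Sf, Sf, ← Finset.sum_sub_distrib]
      rw [Finset.sum_eq_single n]
      · intro m _ hm
        have : ε' m = ε m := Function.update_of_ne hm _ ε
        rw [sgn, sgn, this, sub_self]
      · simp
    have hsgn : sgn ε' n = - sgn ε n := by
      rw [sgn, sgn, hε', Function.update_self]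
      cases ε n <;> simp
    have h2 : Sf y ε - Sf y ε' = (2 : ℝ) • (sgn ε n • y n) := by
      rw [hdiff, hsgn, neg_smul, sub_neg_eq_add, ← two_smul ℝ]
    calc 2 * ‖y n‖ = ‖(2:ℝ) • (sgn ε n • y n)‖ := by
          rw [norm_smul, norm_smul, norm_sgn, one_mul]; simp
      _ = ‖Sf y ε - Sf y ε'‖ := by rw [h2]
      _ ≤ ‖Sf y ε‖ + ‖Sf y ε'‖ := norm_sub_le _ _
  have hbij : ∑ ε : Fin N → Bool, ‖Sf y (Function.update ε n (!(ε n)))‖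
      = ∑ ε : Fin N → Bool, ‖Sf y ε‖ := by
    apply Finset.sum_nbij' (fun ε => Function.update ε n (!(ε n)))
      (fun ε => Function.update ε n (!(ε n)))
    · intros; exact mem_univ _
    · intros; exact mem_univ _
    · intro ε _
      funext m
      by_cases hm : m = n
      · subst hm; simp [Function.update_self]
      · simp [Function.update_of_ne hm]
    · intro ε _
      funext m
      by_cases hm : m = n
      · subst hm; simp [Function.update_self]
      · simp [Function.update_of_ne hm]
    · intros; rfl
  have hsum : (2 ^ N : ℝ) * (2 * ‖y n‖) ≤ 2 * ∑ ε : Fin N → Bool, ‖Sf y ε‖ := by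
    have := Finset.sum_le_sum (fun ε (_ : ε ∈ (univ : Finset (Fin N → Bool))) => key ε)
    rw [Finset.sum_add_distrib, hbij, Finset.sum_const] at this
    have h2 : ((univ : Finset (Fin N → Bool)).card : ℝ) = 2 ^ N := by
      simp [card_univ, Fintype.card_fun]
    rw [nsmul_eq_mul, h2] at this
    linarith
  have h2N : (0:ℝ) < 2 ^ N := by positivity
  rw [← mul_le_mul_iff_right₀ h2N]
  have : (2:ℝ)^N * ((2 ^ N : ℝ)⁻¹ * ∑ ε : Fin N → Bool, ‖Sf y ε‖) = ∑ ε : Fin N → Bool, ‖Sf y ε‖ := by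
    field_simp
  rw [this]
  nlinarith [hsum]

lemma rpow_pow_comm {x : ℝ} (hx : 0 ≤ x) (n : ℕ) (p : ℝ) :
    ((x ^ n : ℝ)) ^ p = (x ^ p) ^ n := by
  rw [← Real.rpow_natCast x n, ← Real.rpow_mul hx, mul_comm, Real.rpow_mul hx,
    Real.rpow_natCast]

set_option maxHeartbeats 1000000 in
theorem kahane (p : ℝ) (hp : 1 ≤ p) (y : Fin N → X) :
    (2 ^ N : ℝ)⁻¹ * ∑ ε : Fin N → Bool, ‖Sf y ε‖ ^ p ≤
      (16 * (3:ℝ) ^ p * ((2 ^ N : ℝ)⁻¹ * ∑ ε : Fin N → Bool, ‖Sf y ε‖)) ^ p := by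
  have hp0 : 0 < p := lt_of_lt_of_le one_pos hp
  have h2N : (0:ℝ) < 2 ^ N := by positivity
  set m : ℝ := (2 ^ N : ℝ)⁻¹ * ∑ ε : Fin N → Bool, ‖Sf y ε‖ with hm
  have hm0 : 0 ≤ m := by
    apply mul_nonneg (by positivity)
    exact Finset.sum_nonneg fun ε _ => norm_nonneg _
  set R : ℝ := (3:ℝ) ^ p with hR
  have hR1 : 1 ≤ R := Real.one_le_rpow (by norm_num) hp0.le
  have hR0 : 0 < R := lt_of_lt_of_le one_pos hR1
  rcases eq_or_lt_of_le hm0 with hmz | hmpos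
  · -- m = 0 : all sums vanish
    have hz : ∀ ε : Fin N → Bool, ‖Sf y ε‖ = 0 := by
      intro ε
      have hsum : ∑ ε : Fin N → Bool, ‖Sf y ε‖ = 0 := by
        have : (2 ^ N : ℝ) * m = ∑ ε : Fin N → Bool, ‖Sf y ε‖ := by
          rw [hm]; field_simp
        rw [← this, ← hmz, mul_zero]
      have := (Finset.sum_eq_zero_iff_of_nonneg
        (fun ε _ => norm_nonneg (Sf y ε))).1 hsum ε (mem_univ ε)
      exact this
    have hL : (2 ^ N : ℝ)⁻¹ * ∑ ε : Fin N → Bool, ‖Sf y ε‖ ^ p = 0 := by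
      rw [Finset.sum_eq_zero, mul_zero]
      intro ε _
      rw [hz ε, Real.zero_rpow hp0.ne']
    rw [hL]
    positivity
  · -- main case m > 0
    have hyn : ∀ n, ‖y n‖ ≤ m := fun n => coeff_le y n
    have hsum_eq : ∑ ε : Fin N → Bool, ‖Sf y ε‖ = 2 ^ N * m := by
      rw [hm]; field_simp
    set q : ℝ → ℝ := fun t => ((Bset y t).card : ℝ) / 2 ^ N with hq
    have hq_nonneg : ∀ t, 0 ≤ q t := fun t => div_nonneg (Nat.cast_nonneg _) h2N.le
    have hq_anti : ∀ {s t : ℝ}, s ≤ t → q t ≤ q s := by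
      intro s t hst
      have hcard : (Bset y t).card ≤ (Bset y s).card := by
        apply card_le_card
        intro ε hε
        simp only [Bset, mem_filter, mem_univ, true_and] at hε ⊢
        exact lt_of_le_of_lt hst hε
      exact div_le_div_of_nonneg_right (by exact_mod_cast hcard) h2N.le
    -- Markov
    have hmarkov : ∀ t : ℝ, 0 < t → q t ≤ m / t := by
      intro t ht
      have h1 : ((Bset y t).card : ℝ) * t ≤ ∑ ε : Fin N → Bool, ‖Sf y ε‖ := by
        calc ((Bset y t).card : ℝ) * t = ∑ _ε ∈ Bset y t, t := by
              rw [Finset.sum_const, nsmul_eq_mul]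
          _ ≤ ∑ ε ∈ Bset y t, ‖Sf y ε‖ := by
              refine Finset.sum_le_sum fun ε hε => ?_
              simp only [Bset, mem_filter] at hε
              exact hε.2.le
          _ ≤ ∑ ε : Fin N → Bool, ‖Sf y ε‖ :=
              Finset.sum_le_sum_of_subset_of_nonneg (subset_univ _)
                (fun ε _ _ => norm_nonneg _)
      rw [hsum_eq] at h1
      rw [hq, div_le_div_iff₀ h2N ht]
      nlinarith
    -- contraction, real form
    have hcontr : ∀ t : ℝ, 0 ≤ t → q (2 * t + m) ≤ 4 * q t ^ 2 := by
      intro t ht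
      have := contraction y ht hm0 hyn
      have hcast : ((Bset y (2 * t + m)).card : ℝ) * 2 ^ N
          ≤ 4 * ((Bset y t).card : ℝ) ^ 2 := by exact_mod_cast this
      rw [hq]
      beta_reduce
      rw [div_le_iff₀ h2N] at *
      have h4 : (0:ℝ) < (2:ℝ)^N * (2:ℝ)^N := by positivity
      rw [div_pow, ← sub_nonneg]
      have expand : 4 * (((Bset y t).card : ℝ) ^ 2 / ((2:ℝ) ^ N) ^ 2) * 2 ^ N
          - ((Bset y (2 * t + m)).card : ℝ)
          = (4 * ((Bset y t).card : ℝ) ^ 2 - ((Bset y (2 * t + m)).card : ℝ) * 2 ^ N)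
            / 2 ^ N := by
        field_simp
      rw [expand]
      apply div_nonneg _ h2N.le
      linarith
    set t0 : ℝ := 8 * R * m with ht0def
    have ht0 : 0 < t0 := by positivity
    have hq0 : q t0 ≤ (8 * R)⁻¹ := by
      have := hmarkov t0 ht0
      rwa [ht0def, show m / (8 * R * m) = (8 * R)⁻¹ by
        rw [eq_comm, inv_eq_iff_eq_inv, eq_comm]
        field_simp] at this
    -- induction
    have hind : ∀ j : ℕ, q ((3:ℝ) ^ j * t0) ≤ (8 * R)⁻¹ * ((2 * R)⁻¹) ^ j := by
      intro j
      induction j with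
      | zero => simpa using hq0
      | succ j ih =>
        have h3j : (1:ℝ) ≤ (3:ℝ) ^ j := one_le_pow₀ (by norm_num)
        have hmt : m ≤ (3:ℝ) ^ j * t0 := by
          have : m ≤ t0 := by nlinarith
          nlinarith
        have hstep : (3:ℝ) ^ (j+1) * t0 ≥ 2 * ((3:ℝ) ^ j * t0) + m := by
          rw [pow_succ]
          nlinarith
        have h1 : q ((3:ℝ) ^ (j+1) * t0) ≤ 4 * q ((3:ℝ) ^ j * t0) ^ 2 :=
          (hq_anti hstep).trans (hcontr ((3:ℝ) ^ j * t0) (by positivity))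
        set u : ℝ := (8 * R)⁻¹ with hu
        set v : ℝ := (2 * R)⁻¹ with hv
        have hu0 : 0 < u := by positivity
        have hv0 : 0 < v := by positivity
        have hv1 : v ≤ 1 := by
          rw [hv]
          rw [inv_le_one_iff₀]
          right; linarith
        have h4uv : 4 * u = v := by
          rw [hu, hv]
          rw [mul_inv_eq_iff_eq_mul₀ (by positivity)]
          field_simp
          ring
        have hvj : v ^ j ≤ 1 := pow_le_one₀ hv0.le hv1
        have hx0 : 0 ≤ q ((3:ℝ) ^ j * t0) := hq_nonneg _
        calc q ((3:ℝ) ^ (j+1) * t0) ≤ 4 * q ((3:ℝ) ^ j * t0) ^ 2 := h1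
          _ ≤ 4 * (u * v ^ j) ^ 2 := by nlinarith [ih, pow_nonneg hv0.le j]
          _ = (4 * u) * (u * (v ^ j * v ^ j)) := by ring
          _ = (u * v ^ (j+1)) * v ^ j := by rw [h4uv, pow_succ]; ring
          _ ≤ u * v ^ (j+1) :=
              mul_le_of_le_one_right (mul_nonneg hu0.le (pow_nonneg hv0.le _)) hvj
    -- choose K with all values below 3^K * t0
    set Mx : ℝ := ∑ n, ‖y n‖ with hMxdef
    have hSf_le : ∀ ε, ‖Sf y ε‖ ≤ Mx := by
      intro ε
      rw [Sf, hMxdef]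
      refine (norm_sum_le _ _).trans (Finset.sum_le_sum fun n _ => ?_)
      rw [norm_smul, norm_sgn, one_mul]
    obtain ⟨K, hK⟩ := pow_unbounded_of_one_lt (R := ℝ) (Mx / t0) (by norm_num : (1:ℝ) < 3)
    have hKMx : ∀ ε, ‖Sf y ε‖ ≤ 3 ^ K * t0 := by
      intro ε
      refine (hSf_le ε).trans ?_
      rw [div_lt_iff₀ ht0] at hK
      linarith
    -- layer-cake bound, pointwise
    have layer : ∀ ε : Fin N → Bool, ‖Sf y ε‖ ^ p ≤ t0 ^ p
        + ∑ j ∈ range K, ((3:ℝ) ^ (j+1) * t0) ^ p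
            * (if (3:ℝ) ^ j * t0 < ‖Sf y ε‖ then 1 else 0) := by
      intro ε
      have hs0 : (0:ℝ) ≤ ‖Sf y ε‖ := norm_nonneg _
      have hterm : ∀ j ∈ range K, (0:ℝ) ≤ ((3:ℝ) ^ (j+1) * t0) ^ p
          * (if (3:ℝ) ^ j * t0 < ‖Sf y ε‖ then 1 else 0) := by
        intro j _
        apply mul_nonneg (by positivity)
        split <;> norm_num
      by_cases hc : ‖Sf y ε‖ ≤ t0
      · have h1 : ‖Sf y ε‖ ^ p ≤ t0 ^ p := Real.rpow_le_rpow hs0 hc hp0.le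
        have h2 : (0:ℝ) ≤ ∑ j ∈ range K, ((3:ℝ) ^ (j+1) * t0) ^ p
            * (if (3:ℝ) ^ j * t0 < ‖Sf y ε‖ then 1 else 0) := Finset.sum_nonneg hterm
        linarith
      · push_neg at hc
        have hK0 : 0 < K := by
          rcases Nat.eq_zero_or_pos K with h | h
          · exfalso
            have := hKMx ε
            rw [h, pow_zero, one_mul] at this
            linarith
          · exact h
        set J := (range K).filter (fun j => (3:ℝ) ^ j * t0 < ‖Sf y ε‖) with hJ
        have hJne : J.Nonempty := ⟨0, by
          simp only [hJ, mem_filter, mem_range]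
          exact ⟨hK0, by rw [pow_zero, one_mul]; exact hc⟩⟩
        set j0 := J.max' hJne with hj0def
        have hj0 : j0 ∈ J := J.max'_mem hJne
        rw [hJ, mem_filter, mem_range] at hj0
        have hup : ‖Sf y ε‖ ≤ (3:ℝ) ^ (j0+1) * t0 := by
          by_cases hj1 : j0 + 1 < K
          · by_contra hcon
            push_neg at hcon
            have hmem : j0 + 1 ∈ J := by
              rw [hJ, mem_filter, mem_range]
              exact ⟨hj1, hcon⟩
            have := J.le_max' _ hmem
            rw [← hj0def] at this
            omega
          · push_neg at hj1
            refine (hKMx ε).trans ?_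
            have h3 : (3:ℝ) ^ K ≤ 3 ^ (j0+1) := pow_le_pow_right₀ (by norm_num) hj1
            nlinarith
        have hsingle : ((3:ℝ) ^ (j0+1) * t0) ^ p
            * (if (3:ℝ) ^ j0 * t0 < ‖Sf y ε‖ then 1 else 0)
            ≤ ∑ j ∈ range K, ((3:ℝ) ^ (j+1) * t0) ^ p
              * (if (3:ℝ) ^ j * t0 < ‖Sf y ε‖ then 1 else 0) :=
          Finset.single_le_sum hterm (mem_range.2 hj0.1)
        rw [if_pos hj0.2, mul_one] at hsingle
        have h1 : ‖Sf y ε‖ ^ p ≤ ((3:ℝ) ^ (j0+1) * t0) ^ p :=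
          Real.rpow_le_rpow hs0 hup hp0.le
        have ht0p : (0:ℝ) ≤ t0 ^ p := by positivity
        linarith
    -- averaging
    have hite : ∀ j : ℕ, ∑ ε : Fin N → Bool,
        (((3:ℝ) ^ (j+1) * t0) ^ p * (if (3:ℝ) ^ j * t0 < ‖Sf y ε‖ then 1 else 0))
        = ((3:ℝ) ^ (j+1) * t0) ^ p * ((Bset y ((3:ℝ) ^ j * t0)).card : ℝ) := by
      intro j
      rw [← Finset.mul_sum]
      congr 1
      rw [Finset.sum_boole]
      simp [Bset]
    have avg_le : (2 ^ N : ℝ)⁻¹ * ∑ ε : Fin N → Bool, ‖Sf y ε‖ ^ p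
        ≤ t0 ^ p + ∑ j ∈ range K, ((3:ℝ) ^ (j+1) * t0) ^ p * q ((3:ℝ) ^ j * t0) := by
      have hsum := Finset.sum_le_sum
        (fun ε (_ : ε ∈ (univ : Finset (Fin N → Bool))) => layer ε)
      rw [Finset.sum_add_distrib, Finset.sum_const, Finset.sum_comm] at hsum
      simp only [hite] at hsum
      have hcard : ((univ : Finset (Fin N → Bool)).card : ℝ) = 2 ^ N := by
        simp [card_univ, Fintype.card_fun]
      have h2 : (2 ^ N : ℝ)⁻¹ * ∑ ε : Fin N → Bool, ‖Sf y ε‖ ^ p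
          ≤ (2 ^ N : ℝ)⁻¹ * ((univ : Finset (Fin N → Bool)).card • t0 ^ p
            + ∑ j ∈ range K, ((3:ℝ) ^ (j+1) * t0) ^ p
              * ((Bset y ((3:ℝ) ^ j * t0)).card : ℝ)) :=
        mul_le_mul_of_nonneg_left hsum (by positivity)
      refine h2.trans_eq ?_
      rw [nsmul_eq_mul, hcard, mul_add, Finset.mul_sum]
      congr 1
      · field_simp
      · refine Finset.sum_congr rfl fun j _ => ?_
        rw [hq]
        beta_reduce
        ring
    have perj : ∀ j : ℕ, ((3:ℝ) ^ (j+1) * t0) ^ p * ((8 * R)⁻¹ * ((2 * R)⁻¹) ^ j)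
        = t0 ^ p * ((1/8) * (1/2 : ℝ) ^ j) := by
      intro j
      have h3 : ((3:ℝ) ^ (j+1) * t0) ^ p = R ^ (j+1) * t0 ^ p := by
        rw [Real.mul_rpow (by positivity) ht0.le, rpow_pow_comm (by norm_num), ← hR]
      rw [h3, inv_pow, mul_pow, pow_succ]
      have hR' : R ≠ 0 := hR0.ne'
      field_simp
      ring
      rw [← mul_pow]; norm_num
    have qbound : ∑ j ∈ range K, ((3:ℝ) ^ (j+1) * t0) ^ p * q ((3:ℝ) ^ j * t0)
        ≤ t0 ^ p / 4 := by
      calc ∑ j ∈ range K, ((3:ℝ) ^ (j+1) * t0) ^ p * q ((3:ℝ) ^ j * t0)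
          ≤ ∑ j ∈ range K, ((3:ℝ) ^ (j+1) * t0) ^ p * ((8 * R)⁻¹ * ((2 * R)⁻¹) ^ j) := by
            refine Finset.sum_le_sum fun j _ => ?_
            exact mul_le_mul_of_nonneg_left (hind j) (by positivity)
        _ = ∑ j ∈ range K, (t0 ^ p * (1/8)) * ((1/2 : ℝ) ^ j) := by
            refine Finset.sum_congr rfl fun j _ => ?_
            rw [perj j]; ring
        _ = (t0 ^ p * (1/8)) * ∑ j ∈ range K, ((1/2 : ℝ) ^ j) := by
            rw [Finset.mul_sum]
        _ ≤ (t0 ^ p * (1/8)) * 2 :=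
            mul_le_mul_of_nonneg_left (sum_geometric_two_le K) (by positivity)
        _ = t0 ^ p / 4 := by ring
    have hfin : (2 ^ N : ℝ)⁻¹ * ∑ ε : Fin N → Bool, ‖Sf y ε‖ ^ p ≤ 2 * t0 ^ p := by
      have ht0p : (0:ℝ) ≤ t0 ^ p := by positivity
      have := avg_le.trans (by linarith : t0 ^ p + ∑ j ∈ range K,
        ((3:ℝ) ^ (j+1) * t0) ^ p * q ((3:ℝ) ^ j * t0) ≤ 2 * t0 ^ p)
      exact this
    have h16 : (16 * R * m : ℝ) = 2 * t0 := by rw [ht0def]; ring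
    rw [h16, Real.mul_rpow (by norm_num) ht0.le]
    have h2p : (2:ℝ) ≤ 2 ^ p := by
      nth_rewrite 1 [← Real.rpow_one 2]
      exact Real.rpow_le_rpow_of_exponent_le (by norm_num) hp
    have ht0p : (0:ℝ) ≤ t0 ^ p := by positivity
    nlinarith [hfin]

end KahaneAux

section MainAux

variable {X : Type*} [NormedAddCommGroup X] [NormedSpace ℂ X]

lemma mon_continuous (c : ℕ) : Continuous fun z : ℕ → Circle => mon c z := by
  unfold mon
  exact continuous_finset_prod _ fun i _ =>
    ((continuous_subtype_val.comp (continuous_apply i)).pow _)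

lemma integrable_normpow (p : ℝ) (hp : 1 ≤ p) (N : ℕ) (v : Fin N → X) :
    Integrable (fun z : ℕ → Circle => ‖∑ n : Fin N, mon ((n : ℕ) + 1) z • v n‖ ^ p) muTN := by
  have hcont : Continuous fun z : ℕ → Circle =>
      ‖∑ n : Fin N, mon ((n : ℕ) + 1) z • v n‖ ^ p := by
    apply Continuous.rpow_const
    · exact (continuous_finset_sum _ fun n _ =>
        (mon_continuous _).smul continuous_const).norm
    · intro z; right; linarith
  exact hcont.integrable_of_hasCompactSupport (HasCompactSupport.of_compactSpace _)

end MainAux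

set_option maxHeartbeats 3000000 in


set_option maxHeartbeats 3000000 in
/-- **Remark.** If `(x_n)` is a `C`-RUC sequence in `X`, then `(x_n n^{-s})` is RUC in
`H_p(X)`, with a constant `C'` depending only on `C` and `p`. -/
theorem stmt6 (p : ℝ) (hp : 1 ≤ p) (C : ℝ) (hC : 1 ≤ C) :
    ∃ C' : ℝ, 1 ≤ C' ∧ ∀ (X : Type u) (_ : NormedAddCommGroup X) (_ : NormedSpace ℂ X)
      (_ : CompleteSpace X) (x : ℕ → X),
      (∀ (N : ℕ) (a : Fin N → ℂ),
        Eavg N (fun ε => ‖∑ n : Fin N, sgn ε n • (a n • x ((n : ℕ) + 1))‖) ≤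
          C * ‖∑ n : Fin N, a n • x ((n : ℕ) + 1)‖) →
      ∀ (N : ℕ) (a : Fin N → ℂ),
        Eavg N (fun ε => Hnorm p N (fun n => sgn ε n • (a n • x ((n : ℕ) + 1)))) ≤
          C' * Hnorm p N (fun n => a n • x ((n : ℕ) + 1)) := by
  have hp0 : 0 < p := lt_of_lt_of_le one_pos hp
  have h3p : (1:ℝ) ≤ (3:ℝ) ^ p := Real.one_le_rpow (by norm_num) hp0.le
  set D : ℝ := 16 * (3:ℝ) ^ p * C with hD
  have hD1 : 1 ≤ D := by nlinarith
  have hD0 : 0 ≤ D := by linarith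
  refine ⟨D, hD1, ?_⟩
  intro X _ _ _ x hyp N a
  set v : Fin N → X := fun n => a n • x ((n : ℕ) + 1) with hv
  set G : (Fin N → Bool) → (ℕ → Circle) → ℝ :=
    fun ε z => ‖∑ n : Fin N, mon ((n : ℕ) + 1) z • (sgn ε n • v n)‖ ^ p with hG
  have hGI : ∀ ε, Integrable (G ε) muTN := fun ε => integrable_normpow p hp N _
  have hG0 : ∀ ε z, 0 ≤ G ε z := fun ε z => Real.rpow_nonneg (norm_nonneg _) p
  have hI0 : ∀ ε, 0 ≤ ∫ z, G ε z ∂muTN := fun ε => integral_nonneg (hG0 ε)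
  have hcard : ((Finset.univ : Finset (Fin N → Bool)).card : ℝ) = 2 ^ N := by
    simp [Fintype.card_fun]
  -- Step A : power-mean inequality
  have stepA : Eavg N (fun ε => Hnorm p N (fun n => sgn ε n • v n))
      ≤ ((2 ^ N : ℝ)⁻¹ * ∑ ε : Fin N → Bool, ∫ z, G ε z ∂muTN) ^ (1 / p) := by
    rw [Eavg, Finset.mul_sum, Finset.mul_sum]
    have key := Real.arith_mean_le_rpow_mean (s := Finset.univ)
      (fun _ : Fin N → Bool => (2 ^ N : ℝ)⁻¹)
      (fun ε => (∫ z, G ε z ∂muTN) ^ (1 / p))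
      (fun _ _ => by positivity)
      (by rw [Finset.sum_const, nsmul_eq_mul, hcard]; field_simp)
      (fun ε _ => Real.rpow_nonneg (hI0 ε) _) hp
    have hzp : ∀ ε : Fin N → Bool,
        ((∫ z, G ε z ∂muTN) ^ (1 / p)) ^ p = ∫ z, G ε z ∂muTN := by
      intro ε
      rw [← Real.rpow_mul (hI0 ε), one_div_mul_cancel hp0.ne', Real.rpow_one]
    simp only [hzp] at key
    exact key
  -- Step B : swap finite sum and integral
  have stepB : ∑ ε : Fin N → Bool, ∫ z, G ε z ∂muTN
      = ∫ z, ∑ ε : Fin N → Bool, G ε z ∂muTN :=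
    (integral_finset_sum Finset.univ fun ε _ => hGI ε).symm
  -- pointwise bound
  have hpt : ∀ z : ℕ → Circle, (2 ^ N : ℝ)⁻¹ * ∑ ε : Fin N → Bool, G ε z
      ≤ (D * ‖∑ n : Fin N, mon ((n : ℕ) + 1) z • v n‖) ^ p := by
    intro z
    set yz : Fin N → X := fun n => mon ((n : ℕ) + 1) z • v n with hyz
    have h1' : ∀ ε, ‖∑ n : Fin N, mon ((n : ℕ) + 1) z • (sgn ε n • v n)‖
        = ‖KahaneAux.Sf yz ε‖ := by
      intro ε
      congr 1
      refine Finset.sum_congr rfl fun n _ => ?_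
      rw [hyz]
      exact smul_comm _ _ _
    have h1 : ∀ ε, G ε z = ‖KahaneAux.Sf yz ε‖ ^ p := by
      intro ε
      rw [hG]
      simp only []
      rw [h1' ε]
    have h2 := KahaneAux.kahane p hp yz
    have h3 : (2 ^ N : ℝ)⁻¹ * ∑ ε : Fin N → Bool, ‖KahaneAux.Sf yz ε‖
        ≤ C * ‖∑ n : Fin N, yz n‖ := by
      have hh := hyp N (fun n => mon ((n : ℕ) + 1) z * a n)
      rw [Eavg] at hh
      simp only [mul_smul] at hh
      exact hh
    have h4 : (0 : ℝ) ≤ 16 * (3:ℝ) ^ p := by positivity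
    calc (2 ^ N : ℝ)⁻¹ * ∑ ε : Fin N → Bool, G ε z
        = (2 ^ N : ℝ)⁻¹ * ∑ ε : Fin N → Bool, ‖KahaneAux.Sf yz ε‖ ^ p := by
          rw [Finset.sum_congr rfl fun ε _ => h1 ε]
      _ ≤ (16 * (3:ℝ) ^ p * ((2 ^ N : ℝ)⁻¹ * ∑ ε : Fin N → Bool, ‖KahaneAux.Sf yz ε‖)) ^ p := h2
      _ ≤ (16 * (3:ℝ) ^ p * (C * ‖∑ n : Fin N, yz n‖)) ^ p := by
          apply Real.rpow_le_rpow
          · apply mul_nonneg h4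
            apply mul_nonneg (by positivity)
            exact Finset.sum_nonneg fun ε _ => norm_nonneg _
          · exact mul_le_mul_of_nonneg_left h3 h4
          · exact hp0.le
      _ = (D * ‖∑ n : Fin N, mon ((n : ℕ) + 1) z • v n‖) ^ p := by
          congr 1
          rw [hD, hyz]
          ring
  -- Step D : integrate the pointwise bound
  have intRHS : Integrable
      (fun z : ℕ → Circle => (D * ‖∑ n : Fin N, mon ((n : ℕ) + 1) z • v n‖) ^ p) muTN := by
    have heq : (fun z : ℕ → Circle => (D * ‖∑ n : Fin N, mon ((n : ℕ) + 1) z • v n‖) ^ p)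
        = fun z : ℕ → Circle => D ^ p * ‖∑ n : Fin N, mon ((n : ℕ) + 1) z • v n‖ ^ p :=
      funext fun z => Real.mul_rpow hD0 (norm_nonneg _)
    rw [heq]
    exact (integrable_normpow p hp N v).const_mul _
  have stepD : ∫ z, (2 ^ N : ℝ)⁻¹ * ∑ ε : Fin N → Bool, G ε z ∂muTN
      ≤ ∫ z, (D * ‖∑ n : Fin N, mon ((n : ℕ) + 1) z • v n‖) ^ p ∂muTN := by
    refine integral_mono ?_ intRHS hpt
    exact (integrable_finset_sum Finset.univ fun ε _ => hGI ε).const_mul _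
  -- final computation
  have hfinal : (∫ z, (D * ‖∑ n : Fin N, mon ((n : ℕ) + 1) z • v n‖) ^ p ∂muTN) ^ (1 / p)
      = D * Hnorm p N v := by
    have heq : (fun z : ℕ → Circle => (D * ‖∑ n : Fin N, mon ((n : ℕ) + 1) z • v n‖) ^ p)
        = fun z : ℕ → Circle => D ^ p * ‖∑ n : Fin N, mon ((n : ℕ) + 1) z • v n‖ ^ p :=
      funext fun z => Real.mul_rpow hD0 (norm_nonneg _)
    rw [heq, integral_const_mul, Real.mul_rpow (Real.rpow_nonneg hD0 _)
      (integral_nonneg fun z => Real.rpow_nonneg (norm_nonneg _) _),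
      ← Real.rpow_mul hD0, mul_one_div_cancel hp0.ne', Real.rpow_one, Hnorm]
  calc Eavg N (fun ε => Hnorm p N (fun n => sgn ε n • v n))
      ≤ ((2 ^ N : ℝ)⁻¹ * ∑ ε : Fin N → Bool, ∫ z, G ε z ∂muTN) ^ (1 / p) := stepA
    _ = (∫ z, (2 ^ N : ℝ)⁻¹ * ∑ ε : Fin N → Bool, G ε z ∂muTN) ^ (1 / p) := by
        rw [stepB, ← integral_const_mul]
    _ ≤ (∫ z, (D * ‖∑ n : Fin N, mon ((n : ℕ) + 1) z • v n‖) ^ p ∂muTN) ^ (1 / p) := by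
        apply Real.rpow_le_rpow ?_ stepD (by positivity)
        exact integral_nonneg fun z => mul_nonneg (by positivity)
          (Finset.sum_nonneg fun ε _ => hG0 ε z)
    _ = D * Hnorm p N v := hfinal
end
end
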